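/- For all k,n ∈ ℕ with k ≤ n, the lamplighter space (La(G_{k,n}), d_La) over the two-dimensional grid G_{k,n} admits a biLipschitz embedding into an ℓ1-product of 6 ℝ-trees with distortion at most 12(k+5). -/

import Mathlib

open Metric Set
open scoped Classical ENNReal NNReal

noncomputable section

/-- The underlying set of the lamplighter space over `X`: a lamp configuration
(a finite set of lit lamps) together with the position of the lamplighter. -/
abbrev Lamp (X : Type*) := Finset X × X

namespace Lamplighter

variable {X Y Z : Type*}

/-- The length of the path visiting the points of a list in order,
with respect to the distance function `d`. -/
def pathLength (d : X → X → ℝ) : List X → ℝ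
  | [] => 0
  | [_] => 0
  | x :: y :: l => d x y + pathLength d (y :: l)

/-- The symmetric difference of the lamp configurations of `p` and `q`, as a set. -/
def sd (p q : Lamp X) : Set X :=
  ((p.1 : Set X) \ (q.1 : Set X)) ∪ ((q.1 : Set X) \ (p.1 : Set X))

/-- The traveling salesman semimetric on the lamplighter space:
the infimum of lengths of finite paths starting at `p.2`, ending at `q.2`, and
visiting every point of the symmetric difference of the configurations. -/
def TSP (d : X → X → ℝ) (p q : Lamp X) : ℝ :=
  sInf { s : ℝ | ∃ l : List X, l.head? = some p.2 ∧ l.getLast? = some q.2 ∧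
    (∀ a ∈ sd p q, a ∈ l) ∧ s = pathLength d l }

/-- The diameter (in `ℝ≥0∞`) of a set with respect to a distance function `d`. -/
def ediamD (d : X → X → ℝ) (A : Set X) : ℝ≥0∞ :=
  ⨆ x ∈ A, ⨆ y ∈ A, ENNReal.ofReal (d x y)

/-- The traveling salesman shortcut semimetric:
`TSCP((A,x),(B,y)) = diam({x,y} ∪ (A Δ B))`. -/
def TSCP (d : X → X → ℝ) (p q : Lamp X) : ℝ :=
  (ediamD d ({p.2, q.2} ∪ sd p q)).toReal

/-- `ρ((A,x),(B,y))` is `0` if `A = B` and `1` otherwise. -/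
def rho (p q : Lamp X) : ℝ := if p.1 = q.1 then 0 else 1

/-- The lamplighter metric `d_La = TSP + ρ`. -/
def dLa (d : X → X → ℝ) (p q : Lamp X) : ℝ := TSP d p q + rho p q

/-- `X` is `K`-TSP-efficient if `TSP ≤ K • TSCP` on `La(X)²`. -/
def TSPEfficient (d : X → X → ℝ) (K : ℝ) : Prop :=
  ∀ p q : Lamp X, TSP d p q ≤ K * TSCP d p q

/-- A weak `C`-biLipschitz embedding between spaces with distance functions `dY`, `dZ`:
a family of maps `φ t : Y → Z` (for `t > 0`) such that each `φ t` is `σ t`-Lipschitz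
and `dY x y ≥ C*t` implies `dZ (φ t x) (φ t y) ≥ t * σ t`. -/
def WeakBiLip (dY : Y → Y → ℝ) (dZ : Z → Z → ℝ) (C : ℝ) : Prop :=
  ∃ φ : ℝ → Y → Z, ∀ t : ℝ, 0 < t → ∃ σ : ℝ, 0 < σ ∧
    (∀ x y : Y, dZ (φ t x) (φ t y) ≤ σ * dY x y) ∧
    (∀ x y : Y, C * t ≤ dY x y → t * σ ≤ dZ (φ t x) (φ t y))

/-- `f` is a `C`-biLipschitz embedding (an injective map of biLipschitz
distortion at most `C`, allowing an overall scaling factor `s`). -/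
def BiLipWith (dY : Y → Y → ℝ) (dZ : Z → Z → ℝ) (C : ℝ) (f : Y → Z) : Prop :=
  Function.Injective f ∧ ∃ s : ℝ, 0 < s ∧
    ∀ x y : Y, s * dY x y ≤ dZ (f x) (f y) ∧ dZ (f x) (f y) ≤ C * s * dY x y

/-- Nagata dimension at most `n` with constant at most `γ`: for every scale `s > 0`
there is a covering by sets of diameter at most `γ s` such that every set of diameter
less than `s` meets at most `n + 1` members of the covering. -/
def NagataDimD (d : Y → Y → ℝ) (n : ℕ) (γ : ℝ) : Prop :=
  ∀ s : ℝ, 0 < s → ∃ B : Set (Set Y),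
    (∀ y : Y, ∃ b ∈ B, y ∈ b) ∧
    (∀ b ∈ B, ediamD d b ≤ ENNReal.ofReal (γ * s)) ∧
    (∀ A : Set Y, ediamD d A < ENNReal.ofReal s →
      {b | b ∈ B ∧ (b ∩ A).Nonempty}.encard ≤ ((n : ℕ∞) + 1))

/-- Markov type 2 with constant `M`, for the distance function `d`: for every stationary
reversible Markov chain on a finite state space (given by a stationary distribution `μ`
and a reversible stochastic transition matrix `P`), every map `f` into the space, and
every time `t`, `E[d(f(Z_t),f(Z_0))²] ≤ M² t E[d(f(Z_1),f(Z_0))²]`. -/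
def HasMarkovType2 (d : Y → Y → ℝ) (M : ℝ) : Prop :=
  ∀ (n : ℕ) (μ : Fin n → ℝ) (P : Matrix (Fin n) (Fin n) ℝ),
    (∀ i, 0 ≤ μ i) → (∑ i, μ i) = 1 →
    (∀ i j, 0 ≤ P i j) → (∀ i, (∑ j, P i j) = 1) →
    (∀ i j, μ i * P i j = μ j * P j i) →
    ∀ (f : Fin n → Y) (t : ℕ),
      (∑ i, ∑ j, μ i * (P ^ t) i j * d (f i) (f j) ^ 2) ≤
        M ^ 2 * t * ∑ i, ∑ j, μ i * P i j * d (f i) (f j) ^ 2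

/-- `D`-doubling: every ball of radius `r` can be covered by `D` balls of radius `r/2`. -/
def Doubling (d : Y → Y → ℝ) (D : ℕ) : Prop :=
  ∀ r : ℝ, 0 < r → ∀ x : Y, ∃ c : Fin D → Y,
    ∀ y : Y, d x y ≤ r → ∃ i, d (c i) y ≤ r / 2

/-- `A` is an arc from `x` to `y`: the image of an injective continuous map of `[0,1]`
sending the endpoints to `x` and `y`. -/
def IsArc {T : Type*} [MetricSpace T] (x y : T) (A : Set T) : Prop :=
  ∃ γ : ℝ → T, ContinuousOn γ (Icc 0 1) ∧ InjOn γ (Icc 0 1) ∧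
    γ 0 = x ∧ γ 1 = y ∧ γ '' (Icc 0 1) = A

/-- `A` is a geodesic segment from `x` to `y`: the image of an isometric embedding
of `[0, dist x y]` sending the endpoints to `x` and `y`. -/
def IsGeodesicSeg {T : Type*} [MetricSpace T] (x y : T) (A : Set T) : Prop :=
  ∃ γ : ℝ → T, γ 0 = x ∧ γ (dist x y) = y ∧
    (∀ s ∈ Icc (0 : ℝ) (dist x y), ∀ t ∈ Icc (0 : ℝ) (dist x y),
      dist (γ s) (γ t) = |s - t|) ∧
    γ '' (Icc 0 (dist x y)) = A

/-- `T` is an ℝ-tree: any two (distinct) points are joined by a unique arc,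
and this arc is a geodesic. -/
def IsRTree (T : Type*) [MetricSpace T] : Prop :=
  ∀ x y : T, x ≠ y →
    (∃ A : Set T, IsArc x y A) ∧
    (∀ A A' : Set T, IsArc x y A → IsArc x y A' → A = A') ∧
    (∀ A : Set T, IsArc x y A → IsGeodesicSeg x y A)

/-- The sup (ℓ∞-product) distance on a finite product of metric spaces. -/
def piSupDist {n : ℕ} {T : Fin n → Type*} (I : ∀ i, MetricSpace (T i)) :
    (∀ i, T i) → (∀ i, T i) → ℝ :=
  letI := I
  fun f g => dist f g

/-- The ℓ1-product distance on a finite product of metric spaces. -/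
def piL1Dist {n : ℕ} {T : Fin n → Type*} (I : ∀ i, MetricSpace (T i)) :
    (∀ i, T i) → (∀ i, T i) → ℝ :=
  letI := I
  fun f g => ∑ i, dist (f i) (g i)

/-- The ℓ1 distance on `ℝ^m`. -/
def l1Dist (m : ℕ) (x y : Fin m → ℝ) : ℝ := ∑ i, |x i - y i|

/-- The ℓp distance on `ℝ^m`. -/
def lpDist (m : ℕ) (p : ℝ) (x y : Fin m → ℝ) : ℝ :=
  (∑ i, |x i - y i| ^ p) ^ (1 / p)

/-- The (pseudo)distance of the ℝ-star over the index type `ι`: the wedge sum of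
copies of `[0,∞)` indexed by `ι`, glued at `0`. -/
def starDist {ι : Type*} (p q : ι × ℝ≥0) : ℝ :=
  if p.1 = q.1 then |(p.2 : ℝ) - (q.2 : ℝ)| else (p.2 : ℝ) + (q.2 : ℝ)

/-- The sup (ℓ∞-product) of finitely many distance functions. -/
def supD {n : ℕ} {T : Fin n → Type*} (d : ∀ i, T i → T i → ℝ) (f g : ∀ i, T i) : ℝ :=
  ((Finset.univ.sup fun i => (d i (f i) (g i)).toNNReal : ℝ≥0) : ℝ)

/-- The infimum of distortions of biLipschitz embeddings of `(Y, dY)` into `(Z, dZ)`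
(`∞` if there is no such embedding). -/
def cEmb (dY : Y → Y → ℝ) (dZ : Z → Z → ℝ) : ℝ≥0∞ :=
  sInf { D : ℝ≥0∞ | ∃ C : ℝ, 0 < C ∧ D = ENNReal.ofReal C ∧
    ∃ f : Y → Z, BiLipWith dY dZ C f }

/-- `c_1^{m,dom}(X,d)`: the infimum of all `D > 0` such that there exist injective
`1`-Lipschitz maps `φ i : X → ℝ` and weights `α i ≥ 0` summing to `1` with
`∑ i, α i * |φ i x - φ i y| ≥ d x y / D` for all `x y` (`∞` if there is none). -/
def c1dom (d : X → X → ℝ) (m : ℕ) : ℝ≥0∞ :=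
  sInf { D : ℝ≥0∞ | ∃ C : ℝ, 0 < C ∧ D = ENNReal.ofReal C ∧
    ∃ (φ : Fin m → X → ℝ) (α : Fin m → ℝ),
      (∀ i, Function.Injective (φ i)) ∧
      (∀ i, ∀ x y : X, |φ i x - φ i y| ≤ d x y) ∧
      (∀ i, 0 ≤ α i) ∧ (∑ i, α i) = 1 ∧
      ∀ x y : X, d x y / C ≤ ∑ i, α i * |φ i x - φ i y| }

/-- The Hamming distance on the Hamming cube `{0,1}^M`, as a real number. -/
def hamDist {M : ℕ} (x y : Fin M → Bool) : ℝ :=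
  ((Finset.univ.filter fun i => x i ≠ y i).card : ℝ)

/-- The star graph `St_{n,k}`: the one-point coalescence of `n` paths of length `k`,
realized inside `ℤ^n` as the multiples `α eᵢ` with `0 ≤ α ≤ k`. -/
def St (n k : ℕ) : Type :=
  {x : Fin n → ℤ // ∃ i : Fin n, (∀ j : Fin n, j ≠ i → x j = 0) ∧ 0 ≤ x i ∧ x i ≤ (k : ℤ)}

/-- The ℓ1 metric on the star graph `St_{n,k}`. -/
def stDist {n k : ℕ} (x y : St n k) : ℝ := ∑ j, |(x.1 j : ℝ) - (y.1 j : ℝ)|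

/-- The endpoint `k eᵢ` of the `i`-th branch of the star graph. -/
def St.endpoint {n k : ℕ} (i : Fin n) : St n k :=
  ⟨fun j => if j = i then (k : ℤ) else 0, i, fun j hj => if_neg hj, by simp, by simp⟩

/-- The cycle metric on `ℤ/nℤ`. -/
def cycDist {n : ℕ} (a b : ZMod n) : ℝ := ((min ((a - b).val) ((b - a).val) : ℕ) : ℝ)

/-- The rectangular grid `G_{k,n} = ([0,k] ∩ ℤ) × ([0,n] ∩ ℤ)`. -/
def Grid2 (k n : ℕ) : Type :=
  {p : ℤ × ℤ // 0 ≤ p.1 ∧ p.1 ≤ (k : ℤ) ∧ 0 ≤ p.2 ∧ p.2 ≤ (n : ℤ)}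

/-- The ℓ1 metric on the grid `G_{k,n}`. -/
def grid2Dist {k n : ℕ} (x y : Grid2 k n) : ℝ :=
  |(x.1.1 : ℝ) - (y.1.1 : ℝ)| + |(x.1.2 : ℝ) - (y.1.2 : ℝ)|

/-- The `m`-dimensional grid `G^m({n_i}) = ∏ i, ([0, n_i] ∩ ℤ)`. -/
def GridM (m : ℕ) (n : Fin m → ℕ) : Type :=
  {p : Fin m → ℤ // ∀ i, 0 ≤ p i ∧ p i ≤ (n i : ℤ)}

/-- The ℓ1 metric on the `m`-dimensional grid. -/
def gridMDist {m : ℕ} {n : Fin m → ℕ} (x y : GridM m n) : ℝ :=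
  ∑ i, |(x.1 i : ℝ) - (y.1 i : ℝ)|

theorem arc_eq {T : Type*} [MetricSpace T] {x y : T} {G A : Set T}
    (hG : IsArc x y G)
    (hsep : ∀ g ∈ G, g ≠ x → g ≠ y → ∃ U V : Set T, IsOpen U ∧ IsOpen V ∧
      x ∈ U ∧ y ∈ V ∧ Disjoint U V ∧ ∀ z, z ≠ g → z ∈ U ∨ z ∈ V)
    (hA : IsArc x y A) : A = G := by
  obtain ⟨γ, hγc, hγi, hγ0, hγ1, hγim⟩ := hA
  obtain ⟨η, hηc, hηi, hη0, hη1, hηim⟩ := hG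
  have hxA : x ∈ A := by rw [← hγim]; exact ⟨0, ⟨le_refl _, zero_le_one⟩, hγ0⟩
  have hyA : y ∈ A := by rw [← hγim]; exact ⟨1, ⟨zero_le_one, le_refl _⟩, hγ1⟩
  have hxG : x ∈ G := by rw [← hηim]; exact ⟨0, ⟨le_refl _, zero_le_one⟩, hη0⟩
  have hyG : y ∈ G := by rw [← hηim]; exact ⟨1, ⟨zero_le_one, le_refl _⟩, hη1⟩
  have hApc : IsPreconnected A := by
    rw [← hγim]; exact isPreconnected_Icc.image _ hγc
  have hGpc : IsPreconnected G := by
    rw [← hηim]; exact isPreconnected_Icc.image _ hηc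
  -- G ⊆ A
  have hGA : G ⊆ A := by
    intro g hg
    by_contra hgA
    have hgx : g ≠ x := by rintro rfl; exact hgA hxA
    have hgy : g ≠ y := by rintro rfl; exact hgA hyA
    obtain ⟨U, V, hU, hV, hxU, hyV, hdis, hcov⟩ := hsep g hg hgx hgy
    have hAsub : A ⊆ U ∪ V := fun z hz => hcov z (fun hzg => hgA (hzg ▸ hz))
    obtain ⟨z, _, hzUV⟩ := hApc U V hU hV hAsub ⟨x, hxA, hxU⟩ ⟨y, hyA, hyV⟩
    exact (hdis.ne_of_mem hzUV.1 hzUV.2) rfl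
  -- A ⊆ G
  have hAG : A ⊆ G := by
    intro a ha
    by_contra haG
    rw [← hγim] at ha
    obtain ⟨θ, hθ, rfl⟩ := ha
    have hθ0 : θ ≠ 0 := by rintro rfl; exact haG (hγ0 ▸ hxG)
    have hθ1 : θ ≠ 1 := by rintro rfl; exact haG (hγ1 ▸ hyG)
    set C1 := γ '' Icc 0 θ with hC1
    set C2 := γ '' Icc θ 1 with hC2
    have hsub1 : Icc 0 θ ⊆ Icc (0:ℝ) 1 := Icc_subset_Icc (le_refl _) hθ.2
    have hsub2 : Icc θ 1 ⊆ Icc (0:ℝ) 1 := Icc_subset_Icc hθ.1 (le_refl _)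
    have hc1 : IsClosed C1 := (isCompact_Icc.image_of_continuousOn (hγc.mono hsub1)).isClosed
    have hc2 : IsClosed C2 := (isCompact_Icc.image_of_continuousOn (hγc.mono hsub2)).isClosed
    have hxU : x ∉ C2 := by
      rintro ⟨β, hβ, hβx⟩
      have : β = 0 := hγi (hsub2 hβ) ⟨le_refl _, zero_le_one⟩ (hβx.trans hγ0.symm)
      exact hθ0 (le_antisymm (this ▸ hβ.1) hθ.1)
    have hyV : y ∉ C1 := by
      rintro ⟨β, hβ, hβy⟩
      have : β = 1 := hγi (hsub1 hβ) ⟨zero_le_one, le_refl _⟩ (hβy.trans hγ1.symm)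
      exact hθ1 (le_antisymm hθ.2 (this ▸ hβ.2))
    have hC12 : C1 ∪ C2 = A := by
      rw [hC1, hC2, ← image_union, Icc_union_Icc_eq_Icc hθ.1 hθ.2, hγim]
    have hGsub : G ⊆ C2ᶜ ∪ C1ᶜ := by
      intro z hz
      by_contra hcon
      simp only [mem_union, mem_compl_iff, not_or, not_not] at hcon
      obtain ⟨⟨β2, hβ2, hz2⟩, ⟨β1, hβ1, hz1⟩⟩ := hcon
      have hβeq : β1 = β2 := hγi (hsub1 hβ1) (hsub2 hβ2) (hz1.trans hz2.symm)
      have : β1 = θ := le_antisymm hβ1.2 (hβeq ▸ hβ2.1)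
      exact haG (by rw [← this, hz1]; exact hz)
    obtain ⟨z, hzG, hzUV⟩ := hGpc C2ᶜ C1ᶜ hc2.isOpen_compl hc1.isOpen_compl hGsub
      ⟨x, hxG, hxU⟩ ⟨y, hyG, hyV⟩
    have : z ∉ A := fun hzA => by
      rcases (hC12 ▸ hzA) with h1 | h2
      · exact hzUV.2 h1
      · exact hzUV.1 h2
    exact this (hGA hzG)
  exact subset_antisymm hAG hGA

/-- Data for building an ℝ-tree by gluing branches indexed by `Λ`:
`mu a b` is the level at which branches `a` and `b` merge. -/
structure UltraData (Λ : Type*) where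
  mu : Λ → Λ → ℝ
  musymm : ∀ a b, mu a b = mu b a
  ultra : ∀ a b c, mu a c ≤ max (mu a b) (mu b c)
  muself : ∀ a, mu a a ≤ 0

namespace UltraData

variable {Λ : Type*} (U : UltraData Λ)

/-- The pre-distance on `Λ × ℝ≥0`. -/
def pd (p q : Λ × ℝ≥0) : ℝ :=
  2 * max (max (p.2 : ℝ) (q.2 : ℝ)) (U.mu p.1 q.1) - p.2 - q.2

lemma le_max₁ (p q : Λ × ℝ≥0) : (p.2 : ℝ) ≤ max (max (p.2 : ℝ) (q.2 : ℝ)) (U.mu p.1 q.1) :=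
  le_max_of_le_left (le_max_left _ _)

lemma le_max₂ (p q : Λ × ℝ≥0) : (q.2 : ℝ) ≤ max (max (p.2 : ℝ) (q.2 : ℝ)) (U.mu p.1 q.1) :=
  le_max_of_le_left (le_max_right _ _)

lemma pd_nonneg (p q : Λ × ℝ≥0) : 0 ≤ U.pd p q := by
  have h1 := U.le_max₁ p q
  have h2 := U.le_max₂ p q
  unfold pd; linarith

lemma pd_self (p : Λ × ℝ≥0) : U.pd p p = 0 := by
  have h1 : U.mu p.1 p.1 ≤ (p.2 : ℝ) := (U.muself p.1).trans p.2.coe_nonneg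
  unfold pd
  rw [max_self, max_eq_left h1]
  ring

lemma pd_comm (p q : Λ × ℝ≥0) : U.pd p q = U.pd q p := by
  unfold pd
  rw [max_comm (p.2 : ℝ) (q.2 : ℝ), U.musymm p.1 q.1]
  ring

lemma pd_triangle (p q r : Λ × ℝ≥0) : U.pd p r ≤ U.pd p q + U.pd q r := by
  have h1 := U.le_max₁ p q
  have h2 := U.le_max₂ p q
  have h3 := U.le_max₁ q r
  have h4 := U.le_max₂ q r
  have h5 : U.mu p.1 q.1 ≤ max (max (p.2 : ℝ) (q.2 : ℝ)) (U.mu p.1 q.1) := le_max_right _ _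
  have h6 : U.mu q.1 r.1 ≤ max (max (q.2 : ℝ) (r.2 : ℝ)) (U.mu q.1 r.1) := le_max_right _ _
  have key : max (max (p.2 : ℝ) (r.2 : ℝ)) (U.mu p.1 r.1) ≤
      max (max (p.2 : ℝ) (q.2 : ℝ)) (U.mu p.1 q.1) +
      max (max (q.2 : ℝ) (r.2 : ℝ)) (U.mu q.1 r.1) - (q.2 : ℝ) := by
    refine max_le (max_le (by linarith) (by linarith)) ?_
    calc U.mu p.1 r.1 ≤ max (U.mu p.1 q.1) (U.mu q.1 r.1) := U.ultra _ _ _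
      _ ≤ _ := max_le (by linarith) (by linarith)
  unfold pd; linarith

lemma pd_zero_level {p q : Λ × ℝ≥0} (h : U.pd p q = 0) :
    (p.2 : ℝ) = (q.2 : ℝ) ∧ U.mu p.1 q.1 ≤ (p.2 : ℝ) := by
  have h1 := U.le_max₁ p q
  have h2 := U.le_max₂ p q
  have h5 : U.mu p.1 q.1 ≤ max (max (p.2 : ℝ) (q.2 : ℝ)) (U.mu p.1 q.1) := le_max_right _ _
  unfold pd at h
  constructor <;> linarith

/-- The setoid identifying points at pre-distance zero. -/
def tsetoid : Setoid (Λ × ℝ≥0) where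
  r p q := U.pd p q = 0
  iseqv := by
    refine ⟨fun p => U.pd_self p, ?_, ?_⟩
    · intro p q h; rw [U.pd_comm]; exact h
    · intro p q r h1 h2
      have := U.pd_triangle p q r
      have := U.pd_nonneg p r
      linarith

/-- The ℝ-tree obtained by gluing. -/
def T := Quotient U.tsetoid

lemma pd_congr {p p' q q' : Λ × ℝ≥0} (h1 : U.pd p p' = 0) (h2 : U.pd q q' = 0) :
    U.pd p q = U.pd p' q' := by
  have a1 := U.pd_triangle p' p q
  have a2 := U.pd_triangle p q q'
  have a3 := U.pd_triangle p p' q'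
  have a4 := U.pd_triangle p' q' q
  have c1 : U.pd p' p = 0 := by rw [U.pd_comm]; exact h1
  have c2 : U.pd q' q = 0 := by rw [U.pd_comm]; exact h2
  have a5 := U.pd_triangle p q' q
  have a6 := U.pd_triangle p' q q'
  rw [c1] at a1
  rw [h2] at a2
  rw [h1] at a3
  rw [c2] at a4
  rw [c2] at a5
  rw [h2] at a6
  linarith

/-- The distance on the quotient. -/
def dT : U.T → U.T → ℝ :=
  Quotient.lift₂ U.pd (by
    intro p q p' q' h1 h2
    exact U.pd_congr h1 h2)

instance pseudometric : PseudoMetricSpace U.T where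
  dist := U.dT
  dist_self := by
    rintro ⟨p⟩; exact U.pd_self p
  dist_comm := by
    rintro ⟨p⟩ ⟨q⟩; exact U.pd_comm p q
  dist_triangle := by
    rintro ⟨p⟩ ⟨q⟩ ⟨r⟩; exact U.pd_triangle p q r

instance metric : MetricSpace U.T :=
  { U.pseudometric with
    eq_of_dist_eq_zero := by
      rintro ⟨p⟩ ⟨q⟩ h
      exact Quotient.sound h }

/-- The canonical projection to the tree. -/
def pt (p : Λ × ℝ≥0) : U.T := ⟦p⟧

lemma dist_pt (p q : Λ × ℝ≥0) :
    dist (U.pt p) (U.pt q) = U.pd p q := rfl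

lemma pt_eq {p q : Λ × ℝ≥0} (h : U.pd p q = 0) : U.pt p = U.pt q :=
  Quotient.sound h

lemma pt_surjective : Function.Surjective U.pt := by
  rintro ⟨p⟩; exact ⟨p, rfl⟩


section Geodesic

variable (p q : Λ × ℝ≥0)

/-- The merge level of the branches through `p` and `q`. -/
def mm : ℝ := max (max (p.2 : ℝ) (q.2 : ℝ)) (U.mu p.1 q.1)

lemma fst_le_mm : (p.2 : ℝ) ≤ U.mm p q := U.le_max₁ p q
lemma snd_le_mm : (q.2 : ℝ) ≤ U.mm p q := U.le_max₂ p q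
lemma mu_le_mm : U.mu p.1 q.1 ≤ U.mm p q := le_max_right _ _
lemma pd_eq_mm : U.pd p q = 2 * U.mm p q - (p.2 : ℝ) - (q.2 : ℝ) := rfl
lemma mm_comm : U.mm p q = U.mm q p := by
  unfold mm; rw [max_comm ((p.2 : ℝ)) ((q.2 : ℝ)), U.musymm]

lemma sub_le_pd : U.mm p q - (p.2 : ℝ) ≤ U.pd p q := by
  have := U.snd_le_mm p q
  rw [U.pd_eq_mm]; linarith

/-- The geodesic parametrization (before clamping). -/
def gam0 (r : ℝ) : Λ × ℝ≥0 :=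
  if r ≤ U.mm p q - (p.2 : ℝ) then (p.1, Real.toNNReal ((p.2 : ℝ) + r))
  else (q.1, Real.toNNReal (2 * U.mm p q - (p.2 : ℝ) - r))

/-- The geodesic parametrization. -/
def gam (r : ℝ) : U.T := U.pt (U.gam0 p q (max 0 (min r (U.pd p q))))

lemma gam_eq_of_mem {r : ℝ} (hr : r ∈ Icc 0 (U.pd p q)) :
    U.gam p q r = U.pt (U.gam0 p q r) := by
  unfold gam
  rw [min_eq_left hr.2, max_eq_right hr.1]

lemma pd_gam0 {r r' : ℝ} (h0 : 0 ≤ r) (hrr : r ≤ r') (hD : r' ≤ U.pd p q) :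
    U.pd (U.gam0 p q r) (U.gam0 p q r') = r' - r := by
  have ht0 : (0:ℝ) ≤ (p.2 : ℝ) := p.2.coe_nonneg
  have hs0 : (0:ℝ) ≤ (q.2 : ℝ) := q.2.coe_nonneg
  have htm := U.fst_le_mm p q
  have hsm := U.snd_le_mm p q
  have hmum := U.mu_le_mm p q
  have hDm := U.pd_eq_mm p q
  have h0' : 0 ≤ r' := h0.trans hrr
  by_cases h2 : r ≤ U.mm p q - (p.2 : ℝ)
  · by_cases h1 : r' ≤ U.mm p q - (p.2 : ℝ)
    · -- both on the branch of p
      unfold gam0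
      rw [if_pos h2, if_pos h1]
      unfold pd
      dsimp only
      rw [Real.coe_toNNReal _ (by linarith), Real.coe_toNNReal _ (by linarith)]
      have hm1 : U.mu p.1 p.1 ≤ max ((p.2:ℝ) + r) ((p.2:ℝ) + r') :=
        le_trans (U.muself p.1) (le_trans (by linarith) (le_max_left _ _))
      rw [max_eq_left hm1, max_eq_right (by linarith : (p.2:ℝ) + r ≤ (p.2:ℝ) + r')]
      ring
    · -- mixed case
      unfold gam0
      rw [if_pos h2, if_neg h1]
      push_neg at h1
      unfold pd
      dsimp only
      rw [Real.coe_toNNReal _ (by linarith), Real.coe_toNNReal _ (by linarith)]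
      have hmax : max (max ((p.2 : ℝ) + r) (2 * U.mm p q - (p.2 : ℝ) - r')) (U.mu p.1 q.1)
          = U.mm p q := by
        refine le_antisymm (max_le (max_le (by linarith) (by linarith)) hmum) ?_
        rcases max_choice (max ((p.2 : ℝ)) ((q.2 : ℝ))) (U.mu p.1 q.1) with hc | hc
        · rcases max_choice ((p.2 : ℝ)) ((q.2 : ℝ)) with hc2 | hc2
          · -- mm = p.2 : then r = 0
            have hmt : U.mm p q = (p.2 : ℝ) := by unfold mm; rw [hc, hc2]
            have hr00 : r = 0 := le_antisymm (by linarith) h0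
            refine le_max_of_le_left (le_max_of_le_left ?_)
            rw [hr00, hmt]; linarith
          · -- mm = q.2 : contradiction with r' > mm - t
            have hms : U.mm p q = (q.2 : ℝ) := by unfold mm; rw [hc, hc2]
            exfalso; linarith
        · -- mm = mu
          have hmmmu : U.mm p q = U.mu p.1 q.1 := hc
          rw [hmmmu]
          exact le_max_right _ _
      rw [hmax]
      ring
  · -- both on the branch of q
    push_neg at h2
    have h1 : ¬ r' ≤ U.mm p q - (p.2 : ℝ) := by push_neg; linarith
    unfold gam0
    rw [if_neg (by push_neg; exact h2), if_neg h1]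
    push_neg at h1
    unfold pd
    dsimp only
    rw [Real.coe_toNNReal _ (by linarith), Real.coe_toNNReal _ (by linarith)]
    have hb1 : (0:ℝ) ≤ 2 * U.mm p q - (p.2:ℝ) - r := by linarith
    have hm1 : U.mu q.1 q.1 ≤ max (2 * U.mm p q - (p.2:ℝ) - r) (2 * U.mm p q - (p.2:ℝ) - r') :=
      le_trans (U.muself q.1) (le_trans hb1 (le_max_left _ _))
    rw [max_eq_left hm1,
      max_eq_left (by linarith : 2 * U.mm p q - (p.2:ℝ) - r' ≤ 2 * U.mm p q - (p.2:ℝ) - r)]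
    ring

lemma gam_isom : ∀ a ∈ Icc (0:ℝ) (U.pd p q), ∀ b ∈ Icc (0:ℝ) (U.pd p q),
    dist (U.gam p q a) (U.gam p q b) = |a - b| := by
  intro a ha b hb
  rw [U.gam_eq_of_mem p q ha, U.gam_eq_of_mem p q hb]
  rcases le_total a b with hab | hab
  · rw [U.dist_pt, U.pd_gam0 p q ha.1 hab hb.2, abs_of_nonpos (by linarith), neg_sub]
  · rw [U.dist_pt, U.pd_comm, U.pd_gam0 p q hb.1 hab ha.2, abs_of_nonneg (by linarith)]

lemma gam_zero : U.gam p q 0 = U.pt p := by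
  rw [U.gam_eq_of_mem p q ⟨le_refl _, U.pd_nonneg p q⟩]
  have h2 : U.gam0 p q 0 = (p.1, Real.toNNReal ((p.2 : ℝ) + 0)) :=
    if_pos (by linarith [U.sub_le_pd p q, U.pd_nonneg p q, U.fst_le_mm p q])
  rw [h2, add_zero, Real.toNNReal_coe]

lemma gam_last : U.gam p q (U.pd p q) = U.pt q := by
  rw [U.gam_eq_of_mem p q ⟨U.pd_nonneg p q, le_refl _⟩]
  have hDm := U.pd_eq_mm p q
  have hsm := U.snd_le_mm p q
  by_cases hD : U.pd p q ≤ U.mm p q - (p.2 : ℝ)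
  · have hms : U.mm p q = (q.2 : ℝ) := by linarith
    have h2 : U.gam0 p q (U.pd p q) = (p.1, Real.toNNReal ((p.2 : ℝ) + U.pd p q)) := if_pos hD
    have hlev : (p.2 : ℝ) + U.pd p q = (q.2 : ℝ) := by rw [hDm]; linarith
    rw [h2, hlev, Real.toNNReal_coe]
    apply U.pt_eq
    unfold pd
    dsimp only
    rw [max_self, max_eq_left (by rw [← hms]; exact U.mu_le_mm p q)]
    ring
  · have h2 : U.gam0 p q (U.pd p q) = (q.1, Real.toNNReal (2 * U.mm p q - (p.2 : ℝ) - U.pd p q)) :=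
      if_neg hD
    have hlev : 2 * U.mm p q - (p.2 : ℝ) - U.pd p q = (q.2 : ℝ) := by rw [hDm]; ring
    rw [h2, hlev, Real.toNNReal_coe]

/-- The geodesic segment between `p` and `q`. -/
def gseg : Set U.T := U.gam p q '' Icc 0 (U.pd p q)

lemma dist_pt_eq_pd : dist (U.pt p) (U.pt q) = U.pd p q := rfl

lemma isGeo_gseg : IsGeodesicSeg (U.pt p) (U.pt q) (U.gseg p q) := by
  refine ⟨U.gam p q, U.gam_zero p q, ?_, ?_, ?_⟩
  · rw [U.dist_pt_eq_pd]; exact U.gam_last p q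
  · rw [U.dist_pt_eq_pd]; exact U.gam_isom p q
  · rw [U.dist_pt_eq_pd]; rfl

lemma isArc_gseg (hne : U.pt p ≠ U.pt q) : IsArc (U.pt p) (U.pt q) (U.gseg p q) := by
  have hD : 0 < U.pd p q :=
    (U.pd_nonneg p q).lt_of_ne (fun h => hne (U.pt_eq h.symm))
  have hmem : ∀ θ ∈ Icc (0:ℝ) 1, θ * U.pd p q ∈ Icc 0 (U.pd p q) := by
    intro θ hθ
    constructor
    · exact mul_nonneg hθ.1 hD.le
    · calc θ * U.pd p q ≤ 1 * U.pd p q := mul_le_mul_of_nonneg_right hθ.2 hD.le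
        _ = U.pd p q := one_mul _
  have hdist : ∀ θ ∈ Icc (0:ℝ) 1, ∀ θ' ∈ Icc (0:ℝ) 1,
      dist (U.gam p q (θ * U.pd p q)) (U.gam p q (θ' * U.pd p q)) = |θ - θ'| * U.pd p q := by
    intro θ hθ θ' hθ'
    rw [U.gam_isom p q _ (hmem θ hθ) _ (hmem θ' hθ'), ← sub_mul, abs_mul,
      abs_of_nonneg hD.le]
  refine ⟨fun θ => U.gam p q (θ * U.pd p q), ?_, ?_, ?_, ?_, ?_⟩
  · -- continuity
    rw [Metric.continuousOn_iff]
    intro b hb ε hε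
    refine ⟨ε / U.pd p q, div_pos hε hD, ?_⟩
    intro a ha hab
    rw [hdist a ha b hb, ← Real.dist_eq]
    calc dist a b * U.pd p q < ε / U.pd p q * U.pd p q :=
          mul_lt_mul_of_pos_right hab hD
      _ = ε := div_mul_cancel₀ _ hD.ne'
  · -- injectivity
    intro a ha b hb hab
    dsimp only at hab
    by_contra hne2
    have h1 : dist (U.gam p q (a * U.pd p q)) (U.gam p q (b * U.pd p q)) = 0 := by
      rw [hab, dist_self]
    rw [hdist a ha b hb] at h1
    rcases mul_eq_zero.mp h1 with h2 | h2
    · exact hne2 (by have := abs_eq_zero.mp h2; linarith)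
    · exact hD.ne' h2
  · show U.gam p q (0 * U.pd p q) = U.pt p
    rw [zero_mul]; exact U.gam_zero p q
  · show U.gam p q (1 * U.pd p q) = U.pt q
    rw [one_mul]; exact U.gam_last p q
  · have himg : (fun θ : ℝ => θ * U.pd p q) '' Icc 0 1 = Icc 0 (U.pd p q) := by
      rw [Set.image_mul_right_Icc zero_le_one hD.le, zero_mul, one_mul]
    calc (fun θ => U.gam p q (θ * U.pd p q)) '' Icc 0 1
        = U.gam p q '' ((fun θ : ℝ => θ * U.pd p q) '' Icc 0 1) := by
          rw [← Set.image_comp]; rfl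
      _ = U.gseg p q := by rw [himg]; rfl

end Geodesic

section Separation

/-- The level at which the branch through `z` merges with the branch `a`. -/
def phi (a : Λ) : U.T → ℝ :=
  Quotient.lift (fun z : Λ × ℝ≥0 => max (z.2 : ℝ) (U.mu z.1 a)) (by
    intro z z' hzz
    have h1 := U.pd_zero_level hzz
    have h2 : U.mu z'.1 z.1 ≤ (z'.2 : ℝ) := by
      rw [U.musymm, ← h1.1]; exact h1.2
    have hle : ∀ w w' : Λ × ℝ≥0, (w.2 : ℝ) = (w'.2 : ℝ) → U.mu w'.1 w.1 ≤ (w.2 : ℝ) →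
        max ((w'.2 : ℝ)) (U.mu w'.1 a) ≤ max ((w.2 : ℝ)) (U.mu w.1 a) := by
      intro w w' hl hm
      apply max_le
      · rw [← hl]; exact le_max_left _ _
      · calc U.mu w'.1 a ≤ max (U.mu w'.1 w.1) (U.mu w.1 a) := U.ultra _ _ _
          _ ≤ max ((w.2 : ℝ)) (U.mu w.1 a) := max_le_max hm (le_refl _)
    refine le_antisymm ?_ ?_
    · refine hle z' z h1.1.symm ?_
      rw [← h1.1]
      exact h1.2
    · refine hle z z' h1.1 ?_
      rw [h1.1]
      exact h2)

lemma phi_pt (a : Λ) (z : Λ × ℝ≥0) :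
    U.phi a (U.pt z) = max ((z.2 : ℝ)) (U.mu z.1 a) := rfl

lemma phi_le (a : Λ) (x y : U.T) : U.phi a x ≤ U.phi a y + dist x y := by
  obtain ⟨z, rfl⟩ := U.pt_surjective x
  obtain ⟨z', rfl⟩ := U.pt_surjective y
  rw [U.phi_pt, U.phi_pt, U.dist_pt_eq_pd]
  have h1 := U.le_max₁ z z'
  have h2 := U.le_max₂ z z'
  have h3 : U.mu z.1 z'.1 ≤ max (max ((z.2 : ℝ)) ((z'.2 : ℝ))) (U.mu z.1 z'.1) := le_max_right _ _
  have hpd : U.pd z z' = 2 * max (max ((z.2 : ℝ)) ((z'.2 : ℝ))) (U.mu z.1 z'.1)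
      - (z.2 : ℝ) - (z'.2 : ℝ) := rfl
  have h4 : (z'.2 : ℝ) ≤ max ((z'.2 : ℝ)) (U.mu z'.1 a) := le_max_left _ _
  have h5 : U.mu z'.1 a ≤ max ((z'.2 : ℝ)) (U.mu z'.1 a) := le_max_right _ _
  refine max_le (by linarith) ?_
  calc U.mu z.1 a ≤ max (U.mu z.1 z'.1) (U.mu z'.1 a) := U.ultra _ _ _
    _ ≤ _ := max_le (by linarith) (by linarith)

lemma phi_lipschitz (a : Λ) : LipschitzWith 1 (U.phi a) := by
  apply LipschitzWith.of_dist_le_mul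
  intro x y
  rw [NNReal.coe_one, one_mul, Real.dist_eq, abs_sub_le_iff]
  constructor
  · linarith [U.phi_le a x y]
  · have := U.phi_le a y x
    rw [dist_comm] at this
    linarith

lemma septree (p q : Λ × ℝ≥0) {h : ℝ} (hth : (p.2 : ℝ) < h) (hhm : h ≤ U.mm p q)
    (hgy : U.pt (p.1, Real.toNNReal h) ≠ U.pt q) :
    ∃ Uo Vo : Set U.T, IsOpen Uo ∧ IsOpen Vo ∧ U.pt p ∈ Uo ∧ U.pt q ∈ Vo ∧ Disjoint Uo Vo ∧
      ∀ z, z ≠ U.pt (p.1, Real.toNNReal h) → z ∈ Uo ∨ z ∈ Vo := by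
  set g := U.pt (p.1, Real.toNNReal h) with hgdef
  have h0 : (0:ℝ) ≤ h := p.2.coe_nonneg.trans hth.le
  have hcoe : ((Real.toNNReal h : ℝ≥0) : ℝ) = h := Real.coe_toNNReal _ h0
  refine ⟨{z | U.phi p.1 z < h}, {z | h ≤ U.phi p.1 z ∧ z ≠ g}, ?_, ?_, ?_, ?_, ?_, ?_⟩
  · exact (isOpen_Iio).preimage (U.phi_lipschitz p.1).continuous
  · rw [Metric.isOpen_iff]
    rintro z ⟨hz1, hz2⟩
    obtain ⟨w, rfl⟩ := U.pt_surjective z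
    rcases lt_or_eq_of_le hz1 with hlt | heq
    · refine ⟨min (U.phi p.1 (U.pt w) - h) (dist (U.pt w) g), lt_min (by linarith) (dist_pos.mpr hz2), ?_⟩
      intro z' hz'
      rw [Metric.mem_ball] at hz'
      have hz'1 : dist z' (U.pt w) < U.phi p.1 (U.pt w) - h := lt_of_lt_of_le hz' (min_le_left _ _)
      have hz'2 : dist z' (U.pt w) < dist (U.pt w) g := lt_of_lt_of_le hz' (min_le_right _ _)
      constructor
      · have := U.phi_le p.1 (U.pt w) z'
        rw [dist_comm] at this
        linarith
      · intro hc
        rw [hc] at hz'2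
        rw [dist_comm] at hz'2
        linarith
    · -- the subtle case: phi z = h
      obtain ⟨C, r1⟩ := w
      rw [U.phi_pt] at heq
      have hr1h : ((r1 : ℝ)) < h := by
        by_contra hcon
        push_neg at hcon
        -- then r1 = h and mu C p.1 ≤ h so z = g, contradiction
        have hr1e : ((r1 : ℝ)) = h := le_antisymm (heq ▸ le_max_left _ _) hcon
        have hmu : U.mu C p.1 ≤ h := heq ▸ le_max_right _ _
        apply hz2
        apply U.pt_eq
        unfold pd
        dsimp only
        rw [hcoe, hr1e, max_self, max_eq_left hmu]
        ring
      have hmuh : U.mu C p.1 = h := by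
        rcases max_choice ((r1 : ℝ)) (U.mu C p.1) with hc | hc
        · exfalso; rw [hc] at heq; linarith
        · rw [hc] at heq; exact heq.symm
      refine ⟨(h - (r1 : ℝ)) / 2, by linarith, ?_⟩
      intro z' hz'
      rw [Metric.mem_ball] at hz'
      obtain ⟨⟨C', r2⟩, rfl⟩ := U.pt_surjective z'
      have hd : dist (U.pt (C', r2)) (U.pt (C, r1)) = U.pd (C', r2) (C, r1) := rfl
      have hM1 : ((r2 : ℝ)) ≤ max (max ((r2 : ℝ)) ((r1 : ℝ))) (U.mu C' C) := le_max_of_le_left (le_max_left _ _)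
      have hM3 : U.mu C' C ≤ max (max ((r2 : ℝ)) ((r1 : ℝ))) (U.mu C' C) := le_max_right _ _
      have hpd2 : U.pd (C', r2) (C, r1) = 2 * max (max ((r2 : ℝ)) ((r1 : ℝ))) (U.mu C' C)
          - (r2 : ℝ) - (r1 : ℝ) := rfl
      have hmuCC : U.mu C' C < h := by
        rw [hd, hpd2] at hz'
        linarith
      have hphige : h ≤ U.phi p.1 (U.pt (C', r2)) := by
        rw [U.phi_pt]
        have : U.mu C p.1 ≤ max (U.mu C C') (U.mu C' p.1) := U.ultra _ _ _
        rw [U.musymm C C'] at this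
        rcases max_choice (U.mu C' C) (U.mu C' p.1) with hc | hc
        · exfalso; rw [hc] at this; linarith
        · rw [hc] at this
          exact le_max_of_le_right (by linarith)
      have hdzg : dist (U.pt (C, r1)) g = h - (r1 : ℝ) := by
        rw [hgdef, U.dist_pt_eq_pd]
        unfold pd
        dsimp only
        rw [hcoe, max_eq_right hr1h.le, max_eq_left (le_of_eq hmuh)]
        ring
      refine ⟨hphige, ?_⟩
      intro hc
      rw [hc] at hz'
      rw [dist_comm, hdzg] at hz'
      linarith
  · rw [mem_setOf_eq, U.phi_pt]
    rw [max_eq_left ((U.muself p.1).trans p.2.coe_nonneg)]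
    exact hth
  · refine ⟨?_, hgy.symm⟩
    rw [U.phi_pt]
    rcases le_max_iff.mp hhm with h1 | h2
    · rcases le_max_iff.mp h1 with h3 | h4
      · exfalso; linarith
      · exact le_max_of_le_left h4
    · rw [← U.musymm]
      exact le_max_of_le_right h2
  · rw [Set.disjoint_left]
    rintro z hzU ⟨hzV, -⟩
    rw [mem_setOf_eq] at hzU
    linarith
  · intro z hz
    rcases lt_or_ge (U.phi p.1 z) h with hc | hc
    · exact Or.inl hc
    · exact Or.inr ⟨hc, hz⟩

end Separation

theorem isRTree (U : UltraData Λ) : IsRTree U.T := by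
  intro x y hxy
  obtain ⟨p, rfl⟩ := U.pt_surjective x
  obtain ⟨q, rfl⟩ := U.pt_surjective y
  have harc := U.isArc_gseg p q hxy
  have hsep : ∀ g ∈ U.gseg p q, g ≠ U.pt p → g ≠ U.pt q →
      ∃ Uo Vo : Set U.T, IsOpen Uo ∧ IsOpen Vo ∧ U.pt p ∈ Uo ∧ U.pt q ∈ Vo ∧ Disjoint Uo Vo ∧
        ∀ z, z ≠ g → z ∈ Uo ∨ z ∈ Vo := by
    rintro g ⟨r, hr, rfl⟩ hgx hgy
    rw [U.gam_eq_of_mem p q hr] at hgx hgy ⊢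
    have ht0 : (0:ℝ) ≤ (p.2 : ℝ) := p.2.coe_nonneg
    have hs0 : (0:ℝ) ≤ (q.2 : ℝ) := q.2.coe_nonneg
    have htm := U.fst_le_mm p q
    have hsm := U.snd_le_mm p q
    have hDm := U.pd_eq_mm p q
    by_cases hbr : r ≤ U.mm p q - (p.2 : ℝ)
    · have hg0 : U.gam0 p q r = (p.1, Real.toNNReal ((p.2 : ℝ) + r)) := if_pos hbr
      rw [hg0] at hgx hgy ⊢
      have hrpos : 0 < r := by
        rcases lt_or_eq_of_le hr.1 with hc | hc
        · exact hc
        · exfalso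
          apply hgx
          rw [← hc, add_zero, Real.toNNReal_coe]
      exact U.septree p q (by linarith) (by linarith) hgy
    · push_neg at hbr
      have hg0 : U.gam0 p q r = (q.1, Real.toNNReal (2 * U.mm p q - (p.2 : ℝ) - r)) :=
        if_neg (by push_neg; exact hbr)
      rw [hg0] at hgx hgy ⊢
      have hlev1 : (q.2 : ℝ) ≤ 2 * U.mm p q - (p.2 : ℝ) - r := by
        have := hr.2
        rw [hDm] at this
        linarith
      have hlevlt : (q.2 : ℝ) < 2 * U.mm p q - (p.2 : ℝ) - r := by
        rcases lt_or_eq_of_le hlev1 with hc | hc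
        · exact hc
        · exfalso
          apply hgy
          rw [← hc, Real.toNNReal_coe]
      have hmq : U.mm q p = U.mm p q := (U.mm_comm p q).symm
      obtain ⟨Uo, Vo, hUo, hVo, hq1, hp1, hdisj, hcov⟩ :=
        U.septree q p (h := 2 * U.mm p q - (p.2 : ℝ) - r) hlevlt (by rw [hmq]; linarith) hgx
      exact ⟨Vo, Uo, hVo, hUo, hp1, hq1, hdisj.symm, fun z hz => (hcov z hz).symm⟩
  refine ⟨⟨U.gseg p q, harc⟩, ?_, ?_⟩
  · intro A A' hA hA'
    rw [arc_eq harc hsep hA, arc_eq harc hsep hA']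
  · intro A hA
    rw [arc_eq harc hsep hA]
    exact U.isGeo_gseg p q

end UltraData
section PathLemmas

theorem pathLength_cons_head (d : X → X → ℝ) (x b : X) (l : List X) (h : l.head? = some b) :
    pathLength d (x :: l) = d x b + pathLength d l := by
  cases l with
  | nil => simp at h
  | cons c t =>
    simp only [List.head?_cons, Option.some_inj] at h
    subst h
    rfl

theorem pathLength_nonneg {d : X → X → ℝ} (hd : ∀ a b, 0 ≤ d a b) :
    ∀ l : List X, 0 ≤ pathLength d l
  | [] => le_refl _
  | [_] => le_refl _
  | a :: b :: t => by
    have ih := pathLength_nonneg hd (b :: t)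
    have h2 := hd a b
    have h3 : pathLength d (a :: b :: t) = d a b + pathLength d (b :: t) := rfl
    rw [h3]
    linarith

theorem abs_sub_head_le {d : X → X → ℝ} {g : X → ℝ} (hg : ∀ a b, |g a - g b| ≤ d a b)
    (hd : ∀ a b, 0 ≤ d a b) :
    ∀ (l : List X) (x : X), l.head? = some x → ∀ a ∈ l, |g a - g x| ≤ pathLength d l
  | [], x => by simp
  | c :: t, x => by
    intro hx a ha
    simp only [List.head?_cons, Option.some_inj] at hx
    subst hx
    rcases List.mem_cons.mp ha with rfl | hat
    · simpa using pathLength_nonneg hd (a :: t)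
    · cases t with
      | nil => exact absurd hat List.not_mem_nil
      | cons b t' =>
        have ih := abs_sub_head_le hg hd (b :: t') b rfl a hat
        have h1 : pathLength d (c :: b :: t') = d c b + pathLength d (b :: t') := rfl
        have h2 : |g b - g c| ≤ d c b := by rw [abs_sub_comm]; exact hg c b
        calc |g a - g c| ≤ |g a - g b| + |g b - g c| := abs_sub_le _ _ _
          _ ≤ pathLength d (b :: t') + d c b := add_le_add ih h2
          _ = pathLength d (c :: b :: t') := by rw [h1]; ring

theorem pathLength_map_range (d : X → X → ℝ) :
    ∀ (N : ℕ) (F : ℕ → X),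
      pathLength d ((List.range (N + 1)).map F) = ∑ m ∈ Finset.range N, d (F m) (F (m + 1))
  | 0, F => by
    rw [show List.range 1 = [0] from rfl]
    simp [pathLength]
  | N + 1, F => by
    have ih := pathLength_map_range d N (fun m => F (m + 1))
    rw [List.range_succ_eq_map, List.map_cons, List.map_map]
    have hhead : ((List.range (N + 1)).map (F ∘ Nat.succ)).head? = some (F 1) := by
      rw [List.range_succ_eq_map, List.map_cons]
      rfl
    rw [pathLength_cons_head d _ _ _ hhead]
    have hsame : (List.range (N + 1)).map (F ∘ Nat.succ)
        = (List.range (N + 1)).map (fun m => F (m + 1)) := by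
      apply List.map_congr_left
      intro m _
      rfl
    rw [hsame, ih, Finset.sum_range_succ' (fun m => d (F m) (F (m + 1))) N]
    rw [add_comm]

end PathLemmas

section TSPLemmas

lemma mem_sd_iff {p q : Lamp X} {a : X} :
    a ∈ sd p q ↔ a ∈ symmDiff p.1 q.1 := by
  simp only [sd, Set.mem_union, Set.mem_diff, Finset.mem_coe, Finset.mem_symmDiff]

lemma exists_admissible (p q : Lamp X) :
    ∃ l : List X, l.head? = some p.2 ∧ l.getLast? = some q.2 ∧ (∀ a ∈ sd p q, a ∈ l) := by
  classical
  refine ⟨p.2 :: ((symmDiff p.1 q.1).toList ++ [q.2]), rfl, ?_, ?_⟩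
  · rw [show p.2 :: ((symmDiff p.1 q.1).toList ++ [q.2]) =
      (p.2 :: (symmDiff p.1 q.1).toList) ++ [q.2] from rfl]
    exact List.getLast?_concat
  · intro a ha
    rw [mem_sd_iff] at ha
    exact List.mem_cons_of_mem _ (List.mem_append_left _ (Finset.mem_toList.mpr ha))

lemma TSP_le_pathLength {d : X → X → ℝ} (hd : ∀ a b, 0 ≤ d a b) {p q : Lamp X} {l : List X}
    (h1 : l.head? = some p.2) (h2 : l.getLast? = some q.2) (h3 : ∀ a ∈ sd p q, a ∈ l) :
    TSP d p q ≤ pathLength d l := by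
  apply csInf_le
  · refine ⟨0, ?_⟩
    rintro s ⟨l', _, _, _, rfl⟩
    exact pathLength_nonneg hd l'
  · exact ⟨l, h1, h2, h3, rfl⟩

lemma le_TSP {d : X → X → ℝ} {p q : Lamp X} {c : ℝ}
    (h : ∀ l : List X, l.head? = some p.2 → l.getLast? = some q.2 → (∀ a ∈ sd p q, a ∈ l) →
      c ≤ pathLength d l) : c ≤ TSP d p q := by
  apply le_csInf
  · obtain ⟨l, h1, h2, h3⟩ := exists_admissible p q
    exact ⟨pathLength d l, l, h1, h2, h3, rfl⟩
  · rintro s ⟨l, h1, h2, h3, rfl⟩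
    exact h l h1 h2 h3

lemma TSP_nonneg {d : X → X → ℝ} (hd : ∀ a b, 0 ≤ d a b) (p q : Lamp X) :
    0 ≤ TSP d p q :=
  le_TSP (fun l _ _ _ => pathLength_nonneg hd l)

lemma rho_nonneg (p q : Lamp X) : 0 ≤ rho p q := by
  unfold rho; split <;> norm_num

end TSPLemmas

section GridLemmas

variable {k n : ℕ}

/-- The first (ℕ-valued) coordinate on the grid. -/
def gc1 (z : Grid2 k n) : ℕ := z.1.1.toNat
/-- The second (ℕ-valued) coordinate on the grid. -/
def gc2 (z : Grid2 k n) : ℕ := z.1.2.toNat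
/-- The diagonal weight `x₁ + x₂`. -/
def wU (z : Grid2 k n) : ℕ := gc1 z + gc2 z
/-- The antidiagonal weight `x₁ + (n - x₂)`. -/
def wV (z : Grid2 k n) : ℕ := gc1 z + (n - gc2 z)

lemma gc1_le (z : Grid2 k n) : gc1 z ≤ k := Int.toNat_le.mpr z.2.2.1
lemma gc2_le (z : Grid2 k n) : gc2 z ≤ n := Int.toNat_le.mpr z.2.2.2.2
lemma wU_le (z : Grid2 k n) : wU z ≤ k + n := add_le_add (gc1_le z) (gc2_le z)
lemma wV_le (z : Grid2 k n) : wV z ≤ k + n := add_le_add (gc1_le z) (Nat.sub_le n _)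

lemma gc1_castR (z : Grid2 k n) : ((gc1 z : ℕ) : ℝ) = ((z.1.1 : ℤ) : ℝ) := by
  have h := Int.toNat_of_nonneg z.2.1
  exact_mod_cast congrArg (Int.cast : ℤ → ℝ) h

lemma gc2_castR (z : Grid2 k n) : ((gc2 z : ℕ) : ℝ) = ((z.1.2 : ℤ) : ℝ) := by
  have h := Int.toNat_of_nonneg z.2.2.2.1
  exact_mod_cast congrArg (Int.cast : ℤ → ℝ) h

lemma grid2Dist_eq (x y : Grid2 k n) :
    grid2Dist x y = |((gc1 x : ℕ) : ℝ) - ((gc1 y : ℕ) : ℝ)|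
      + |((gc2 x : ℕ) : ℝ) - ((gc2 y : ℕ) : ℝ)| := by
  unfold grid2Dist
  rw [gc1_castR, gc1_castR, gc2_castR, gc2_castR]

lemma grid2Dist_nonneg (x y : Grid2 k n) : 0 ≤ grid2Dist x y := by
  unfold grid2Dist; positivity

lemma wU_real (z : Grid2 k n) : ((wU z : ℕ) : ℝ) = (gc1 z : ℝ) + (gc2 z : ℝ) := by
  unfold wU; push_cast; ring

lemma wV_real (z : Grid2 k n) : ((wV z : ℕ) : ℝ) = (gc1 z : ℝ) + (n : ℝ) - (gc2 z : ℝ) := by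
  unfold wV
  rw [Nat.cast_add, Nat.cast_sub (gc2_le z)]
  ring

lemma abs_wU_le (a b : Grid2 k n) : |((wU a : ℕ) : ℝ) - ((wU b : ℕ) : ℝ)| ≤ grid2Dist a b := by
  rw [grid2Dist_eq, wU_real, wU_real]
  have h : (gc1 a : ℝ) + (gc2 a : ℝ) - ((gc1 b : ℝ) + (gc2 b : ℝ))
      = ((gc1 a : ℝ) - (gc1 b : ℝ)) + ((gc2 a : ℝ) - (gc2 b : ℝ)) := by ring
  rw [h]
  exact abs_add_le _ _

lemma abs_wV_le (a b : Grid2 k n) : |((wV a : ℕ) : ℝ) - ((wV b : ℕ) : ℝ)| ≤ grid2Dist a b := by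
  rw [grid2Dist_eq, wV_real, wV_real]
  have h : (gc1 a : ℝ) + (n : ℝ) - (gc2 a : ℝ) - ((gc1 b : ℝ) + (n : ℝ) - (gc2 b : ℝ))
      = ((gc1 a : ℝ) - (gc1 b : ℝ)) - ((gc2 a : ℝ) - (gc2 b : ℝ)) := by ring
  rw [h]
  exact abs_sub _ _

lemma abs_sub_const_le {K : ℕ} {w : Grid2 k n → ℕ} (hw : ∀ z, w z ≤ K)
    (hab : ∀ a b : Grid2 k n, |((w a : ℕ) : ℝ) - ((w b : ℕ) : ℝ)| ≤ grid2Dist a b)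
    (a b : Grid2 k n) :
    |((K - w a : ℕ) : ℝ) - ((K - w b : ℕ) : ℝ)| ≤ grid2Dist a b := by
  rw [Nat.cast_sub (hw a), Nat.cast_sub (hw b)]
  have h : (K : ℝ) - (w a : ℝ) - ((K : ℝ) - (w b : ℝ)) = -(((w a : ℕ) : ℝ) - ((w b : ℕ) : ℝ)) := by
    ring
  rw [h, abs_neg]
  exact hab a b

end GridLemmas

section SpqLemmas

variable {k n : ℕ}

/-- The relevant set `{x, y} ∪ (A Δ B)` of a pair of lamplighter points. -/
def Spq (p q : Lamp (Grid2 k n)) : Finset (Grid2 k n) :=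
  insert p.2 (insert q.2 (symmDiff p.1 q.1))

lemma Spq_ne (p q : Lamp (Grid2 k n)) : (Spq p q).Nonempty :=
  ⟨p.2, Finset.mem_insert_self _ _⟩

lemma fst_mem_Spq (p q : Lamp (Grid2 k n)) : p.2 ∈ Spq p q := Finset.mem_insert_self _ _

lemma snd_mem_Spq (p q : Lamp (Grid2 k n)) : q.2 ∈ Spq p q :=
  Finset.mem_insert_of_mem (Finset.mem_insert_self _ _)

lemma sd_mem_Spq {p q : Lamp (Grid2 k n)} {a : Grid2 k n} (h : a ∈ symmDiff p.1 q.1) :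
    a ∈ Spq p q :=
  Finset.mem_insert_of_mem (Finset.mem_insert_of_mem h)

lemma max_sup_nat (w : Grid2 k n → ℕ) (p q : Lamp (Grid2 k n)) :
    max (max (w p.2) (w q.2)) ((symmDiff p.1 q.1).sup w)
      = (Spq p q).sup' (Spq_ne p q) w := by
  apply le_antisymm
  · refine max_le (max_le ?_ ?_) ?_
    · exact Finset.le_sup' w (fst_mem_Spq p q)
    · exact Finset.le_sup' w (snd_mem_Spq p q)
    · exact Finset.sup_le fun b hb => Finset.le_sup' w (sd_mem_Spq hb)
  · refine Finset.sup'_le _ _ fun b hb => ?_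
    rcases Finset.mem_insert.mp hb with rfl | hb
    · exact le_max_of_le_left (le_max_left _ _)
    rcases Finset.mem_insert.mp hb with rfl | hb
    · exact le_max_of_le_left (le_max_right _ _)
    · exact le_max_of_le_right (Finset.le_sup hb)

lemma sup'_sub {β : Type*} {s : Finset β} (hs : s.Nonempty) (w : β → ℕ) (K : ℕ)
    (hw : ∀ z, w z ≤ K) :
    s.sup' hs (fun z => K - w z) = K - s.inf' hs w := by
  apply le_antisymm
  · exact Finset.sup'_le _ _ fun b hb => Nat.sub_le_sub_left (Finset.inf'_le w hb) K
  · obtain ⟨z0, hz0, he⟩ := Finset.exists_mem_eq_inf' hs w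
    rw [he]
    exact Finset.le_sup' (fun z => K - w z) hz0

/-- The ℕ-valued maxima/minima of the weights on `Spq`. -/
def MU (p q : Lamp (Grid2 k n)) : ℕ := (Spq p q).sup' (Spq_ne p q) wU
def mU (p q : Lamp (Grid2 k n)) : ℕ := (Spq p q).inf' (Spq_ne p q) wU
def MV (p q : Lamp (Grid2 k n)) : ℕ := (Spq p q).sup' (Spq_ne p q) wV
def mV (p q : Lamp (Grid2 k n)) : ℕ := (Spq p q).inf' (Spq_ne p q) wV

/-- The `u`-range of `Spq`. -/
def Ru (p q : Lamp (Grid2 k n)) : ℝ := ((MU p q : ℕ) : ℝ) - ((mU p q : ℕ) : ℝ)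
/-- The `v`-range of `Spq`. -/
def Rv (p q : Lamp (Grid2 k n)) : ℝ := ((MV p q : ℕ) : ℝ) - ((mV p q : ℕ) : ℝ)

lemma mU_le_MU (p q : Lamp (Grid2 k n)) : mU p q ≤ MU p q :=
  (Finset.inf'_le wU (fst_mem_Spq p q)).trans (Finset.le_sup' wU (fst_mem_Spq p q))

lemma mV_le_MV (p q : Lamp (Grid2 k n)) : mV p q ≤ MV p q :=
  (Finset.inf'_le wV (fst_mem_Spq p q)).trans (Finset.le_sup' wV (fst_mem_Spq p q))

lemma Ru_nonneg (p q : Lamp (Grid2 k n)) : 0 ≤ Ru p q := by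
  unfold Ru
  have := mU_le_MU p q
  have : ((mU p q : ℕ) : ℝ) ≤ ((MU p q : ℕ) : ℝ) := Nat.cast_le.mpr this
  linarith

lemma Rv_nonneg (p q : Lamp (Grid2 k n)) : 0 ≤ Rv p q := by
  unfold Rv
  have := mV_le_MV p q
  have : ((mV p q : ℕ) : ℝ) ≤ ((MV p q : ℕ) : ℝ) := Nat.cast_le.mpr this
  linarith

lemma mem_Spq_mem_list {p q : Lamp (Grid2 k n)} {l : List (Grid2 k n)}
    (h1 : l.head? = some p.2) (h2 : l.getLast? = some q.2) (h3 : ∀ a ∈ sd p q, a ∈ l) :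
    ∀ a ∈ Spq p q, a ∈ l := by
  intro a ha
  rcases Finset.mem_insert.mp ha with rfl | ha
  · exact List.mem_of_mem_head? (Option.mem_def.mpr h1)
  rcases Finset.mem_insert.mp ha with rfl | ha
  · exact List.mem_of_mem_getLast? (Option.mem_def.mpr h2)
  · exact h3 a (mem_sd_iff.mpr ha)

lemma R_le_TSP (p q : Lamp (Grid2 k n)) :
    Ru p q + Rv p q ≤ 4 * TSP grid2Dist p q := by
  have key : (Ru p q + Rv p q) / 4 ≤ TSP grid2Dist p q := by
    apply le_TSP
    intro l h1 h2 h3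
    have hmem := mem_Spq_mem_list h1 h2 h3
    obtain ⟨zU, hzU, hMU⟩ := Finset.exists_mem_eq_sup' (Spq_ne p q) wU
    obtain ⟨zU', hzU', hmU⟩ := Finset.exists_mem_eq_inf' (Spq_ne p q) wU
    obtain ⟨zV, hzV, hMV⟩ := Finset.exists_mem_eq_sup' (Spq_ne p q) wV
    obtain ⟨zV', hzV', hmV⟩ := Finset.exists_mem_eq_inf' (Spq_ne p q) wV
    have hU1 := abs_sub_head_le abs_wU_le grid2Dist_nonneg l p.2 h1 zU (hmem _ hzU)
    have hU2 := abs_sub_head_le abs_wU_le grid2Dist_nonneg l p.2 h1 zU' (hmem _ hzU')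
    have hV1 := abs_sub_head_le abs_wV_le grid2Dist_nonneg l p.2 h1 zV (hmem _ hzV)
    have hV2 := abs_sub_head_le abs_wV_le grid2Dist_nonneg l p.2 h1 zV' (hmem _ hzV')
    have hu1 := abs_le.mp hU1
    have hu2 := abs_le.mp hU2
    have hv1 := abs_le.mp hV1
    have hv2 := abs_le.mp hV2
    have hRu : Ru p q = ((wU zU : ℕ) : ℝ) - ((wU zU' : ℕ) : ℝ) := by
      unfold Ru MU mU; rw [hMU, hmU]
    have hRv : Rv p q = ((wV zV : ℕ) : ℝ) - ((wV zV' : ℕ) : ℝ) := by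
      unfold Rv MV mV; rw [hMV, hmV]
    rw [hRu, hRv]
    linarith
  linarith

end SpqLemmas
section Snake

variable {k n : ℕ}

lemma two_r1_le (p q : Lamp (Grid2 k n)) :
    2 * (((Spq p q).sup' (Spq_ne p q) gc1 : ℕ) : ℝ)
      - 2 * (((Spq p q).inf' (Spq_ne p q) gc1 : ℕ) : ℝ) ≤ Ru p q + Rv p q := by
  obtain ⟨zb, hzb, hb⟩ := Finset.exists_mem_eq_sup' (Spq_ne p q) gc1
  obtain ⟨za, hza, ha⟩ := Finset.exists_mem_eq_inf' (Spq_ne p q) gc1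
  rw [hb, ha]
  have e1 : ∀ z : Grid2 k n, ((wU z : ℕ) : ℝ) + ((wV z : ℕ) : ℝ)
      = 2 * (gc1 z : ℝ) + (n : ℝ) := by
    intro z
    rw [wU_real, wV_real]
    ring
  have h1 : ((wU zb : ℕ) : ℝ) ≤ ((MU p q : ℕ) : ℝ) := Nat.cast_le.mpr (Finset.le_sup' wU hzb)
  have h2 : ((mU p q : ℕ) : ℝ) ≤ ((wU za : ℕ) : ℝ) := Nat.cast_le.mpr (Finset.inf'_le wU hza)
  have h3 : ((wV zb : ℕ) : ℝ) ≤ ((MV p q : ℕ) : ℝ) := Nat.cast_le.mpr (Finset.le_sup' wV hzb)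
  have h4 : ((mV p q : ℕ) : ℝ) ≤ ((wV za : ℕ) : ℝ) := Nat.cast_le.mpr (Finset.inf'_le wV hza)
  have e2 := e1 zb
  have e3 := e1 za
  unfold Ru Rv
  linarith

lemma two_r2_le (p q : Lamp (Grid2 k n)) :
    2 * (((Spq p q).sup' (Spq_ne p q) gc2 : ℕ) : ℝ)
      - 2 * (((Spq p q).inf' (Spq_ne p q) gc2 : ℕ) : ℝ) ≤ Ru p q + Rv p q := by
  obtain ⟨zb, hzb, hb⟩ := Finset.exists_mem_eq_sup' (Spq_ne p q) gc2
  obtain ⟨za, hza, ha⟩ := Finset.exists_mem_eq_inf' (Spq_ne p q) gc2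
  rw [hb, ha]
  have e1 : ∀ z : Grid2 k n, ((wU z : ℕ) : ℝ) - ((wV z : ℕ) : ℝ)
      = 2 * (gc2 z : ℝ) - (n : ℝ) := by
    intro z
    rw [wU_real, wV_real]
    ring
  have h1 : ((wU zb : ℕ) : ℝ) ≤ ((MU p q : ℕ) : ℝ) := Nat.cast_le.mpr (Finset.le_sup' wU hzb)
  have h2 : ((mU p q : ℕ) : ℝ) ≤ ((wU za : ℕ) : ℝ) := Nat.cast_le.mpr (Finset.inf'_le wU hza)
  have h3 : ((mV p q : ℕ) : ℝ) ≤ ((wV zb : ℕ) : ℝ) := Nat.cast_le.mpr (Finset.inf'_le wV hzb)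
  have h4 : ((wV za : ℕ) : ℝ) ≤ ((MV p q : ℕ) : ℝ) := Nat.cast_le.mpr (Finset.le_sup' wV hza)
  have e2 := e1 zb
  have e3 := e1 za
  unfold Ru Rv
  linarith

set_option maxHeartbeats 2000000 in
lemma TSP_le_snake (p q : Lamp (Grid2 k n)) :
    TSP grid2Dist p q ≤ (3 * (k : ℝ) + 15) * (Ru p q + Rv p q) := by
  classical
  set S := Spq p q with hSdef
  have hS : S.Nonempty := Spq_ne p q
  set a1 := S.inf' hS gc1 with ha1def
  set b1 := S.sup' hS gc1 with hb1def
  set a2 := S.inf' hS gc2 with ha2def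
  set b2 := S.sup' hS gc2 with hb2def
  have ha1b1 : a1 ≤ b1 :=
    (Finset.inf'_le gc1 (fst_mem_Spq p q)).trans (Finset.le_sup' gc1 (fst_mem_Spq p q))
  have ha2b2 : a2 ≤ b2 :=
    (Finset.inf'_le gc2 (fst_mem_Spq p q)).trans (Finset.le_sup' gc2 (fst_mem_Spq p q))
  have hb1k : b1 ≤ k := Finset.sup'_le _ _ fun z _ => gc1_le z
  have hb2n : b2 ≤ n := Finset.sup'_le _ _ fun z _ => gc2_le z
  set r1 := b1 - a1 with hr1def
  set r2 := b2 - a2 with hr2def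
  have hr1 : a1 + r1 = b1 := Nat.add_sub_cancel' ha1b1
  have hr2 : a2 + r2 = b2 := Nat.add_sub_cancel' ha2b2
  -- the snake points
  have hpnt : ∀ m : ℕ, ∃ z : Grid2 k n,
      gc1 z = a1 + m % (r1 + 1) ∧ gc2 z = a2 + min (m / (r1 + 1)) r2 := by
    intro m
    have hmod : m % (r1 + 1) ≤ r1 := Nat.lt_succ_iff.mp (Nat.mod_lt _ (Nat.succ_pos _))
    have hmin : min (m / (r1 + 1)) r2 ≤ r2 := min_le_right _ _
    refine ⟨⟨(((a1 + m % (r1 + 1) : ℕ) : ℤ), ((a2 + min (m / (r1 + 1)) r2 : ℕ) : ℤ)),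
      Int.natCast_nonneg _, ?_, Int.natCast_nonneg _, ?_⟩, ?_, ?_⟩
    · show (((a1 + m % (r1 + 1) : ℕ) : ℤ)) ≤ (k : ℤ)
      exact_mod_cast le_trans (hr1 ▸ Nat.add_le_add_left hmod a1) hb1k
    · show (((a2 + min (m / (r1 + 1)) r2 : ℕ) : ℤ)) ≤ (n : ℤ)
      exact_mod_cast le_trans (hr2 ▸ Nat.add_le_add_left hmin a2) hb2n
    · unfold gc1; exact Int.toNat_natCast _
    · unfold gc2; exact Int.toNat_natCast _
  choose pnt hpnt1 hpnt2 using hpnt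
  set M := r1 + r2 * (r1 + 1) with hMdef
  set F : ℕ → Grid2 k n := fun m => if m = 0 then p.2 else if m ≤ M + 1 then pnt (m - 1) else q.2
    with hFdef
  set l := (List.range (M + 3)).map F with hldef
  -- admissibility
  have hhead : l.head? = some p.2 := by
    rw [hldef, List.range_succ_eq_map, List.map_cons]
    simp only [List.head?_cons, Option.some_inj]
    show F 0 = p.2
    simp [hFdef]
  have hlast : l.getLast? = some q.2 := by
    rw [hldef, show M + 3 = (M + 2) + 1 from rfl, List.range_succ, List.map_append]
    rw [List.map_singleton, List.getLast?_concat]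
    show some (F (M + 2)) = some q.2
    have : F (M + 2) = q.2 := by
      simp only [hFdef]
      rw [if_neg (by omega), if_neg (by omega)]
    rw [this]
  have hmemS : ∀ a ∈ S, a ∈ l := by
    intro a haS
    have hi : gc1 a - a1 ≤ r1 := by
      have := Finset.le_sup' gc1 haS
      omega
    have hj : gc2 a - a2 ≤ r2 := by
      have := Finset.le_sup' gc2 haS
      omega
    have hia : a1 ≤ gc1 a := Finset.inf'_le gc1 haS
    have hja : a2 ≤ gc2 a := Finset.inf'_le gc2 haS
    set i := gc1 a - a1 with hidef
    set j := gc2 a - a2 with hjdef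
    set m0 := i + j * (r1 + 1) with hm0def
    have hm0M : m0 ≤ M := by
      have : j * (r1 + 1) ≤ r2 * (r1 + 1) := Nat.mul_le_mul_right _ hj
      omega
    have hilt : i < r1 + 1 := Nat.lt_succ_of_le hi
    have hmod : m0 % (r1 + 1) = i := by
      rw [hm0def, Nat.add_mul_mod_self_right, Nat.mod_eq_of_lt hilt]
    have hdiv : m0 / (r1 + 1) = j := by
      rw [hm0def, Nat.add_mul_div_right _ _ (Nat.succ_pos _), Nat.div_eq_of_lt hilt]
      exact Nat.zero_add j
    have hpa : pnt m0 = a := by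
      have h1 : gc1 (pnt m0) = gc1 a := by
        rw [hpnt1, hmod]; omega
      have h2 : gc2 (pnt m0) = gc2 a := by
        rw [hpnt2, hdiv, min_eq_left hj]; omega
      apply Subtype.ext
      apply Prod.ext
      · rw [← Int.toNat_of_nonneg (pnt m0).2.1, ← Int.toNat_of_nonneg a.2.1]
        exact_mod_cast h1
      · rw [← Int.toNat_of_nonneg (pnt m0).2.2.2.1, ← Int.toNat_of_nonneg a.2.2.2.1]
        exact_mod_cast h2
    have hFa : F (m0 + 1) = a := by
      simp only [hFdef]
      rw [if_neg (by omega), if_pos (by omega)]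
      simpa using hpa
    rw [hldef]
    exact List.mem_map.mpr ⟨m0 + 1, List.mem_range.mpr (by omega), hFa⟩
  have hcov : ∀ a ∈ sd p q, a ∈ l := by
    intro a ha
    exact hmemS a (sd_mem_Spq (mem_sd_iff.mp ha))
  -- length bound
  have hTSP := TSP_le_pathLength grid2Dist_nonneg hhead hlast hcov
  have hlen : pathLength grid2Dist l
      = ∑ m ∈ Finset.range (M + 2), grid2Dist (F m) (F (m + 1)) := by
    rw [hldef, show M + 3 = (M + 2) + 1 from rfl]
    exact pathLength_map_range _ (M + 2) F
  -- coordinates of the snake points: boxes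
  have hpbox1 : ∀ m, a1 ≤ gc1 (pnt m) ∧ gc1 (pnt m) ≤ b1 := by
    intro m
    rw [hpnt1 m]
    have hmod : m % (r1 + 1) ≤ r1 := Nat.lt_succ_iff.mp (Nat.mod_lt _ (Nat.succ_pos _))
    exact ⟨Nat.le_add_right _ _, hr1 ▸ Nat.add_le_add_left hmod a1⟩
  have hpbox2 : ∀ m, a2 ≤ gc2 (pnt m) ∧ gc2 (pnt m) ≤ b2 := by
    intro m
    rw [hpnt2 m]
    exact ⟨Nat.le_add_right _ _, hr2 ▸ Nat.add_le_add_left (min_le_right _ _) a2⟩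
  have hSbox : ∀ z ∈ S, a1 ≤ gc1 z ∧ gc1 z ≤ b1 ∧ a2 ≤ gc2 z ∧ gc2 z ≤ b2 := by
    intro z hz
    exact ⟨Finset.inf'_le gc1 hz, Finset.le_sup' gc1 hz, Finset.inf'_le gc2 hz,
      Finset.le_sup' gc2 hz⟩
  have hboxdist : ∀ z w : Grid2 k n,
      a1 ≤ gc1 z → gc1 z ≤ b1 → a2 ≤ gc2 z → gc2 z ≤ b2 →
      a1 ≤ gc1 w → gc1 w ≤ b1 → a2 ≤ gc2 w → gc2 w ≤ b2 →
      grid2Dist z w ≤ ((r1 : ℕ) : ℝ) + ((r2 : ℕ) : ℝ) := by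
    intro z w hz1 hz2 hz3 hz4 hw1 hw2 hw3 hw4
    rw [grid2Dist_eq]
    have c1 : |((gc1 z : ℕ) : ℝ) - ((gc1 w : ℕ) : ℝ)| ≤ ((r1 : ℕ) : ℝ) := by
      rw [abs_le]
      constructor
      · have h1 : ((gc1 z : ℕ) : ℝ) ≥ (a1 : ℝ) := Nat.cast_le.mpr hz1
        have h2 : ((gc1 w : ℕ) : ℝ) ≤ (b1 : ℝ) := Nat.cast_le.mpr hw2
        have h3 : ((r1 : ℕ) : ℝ) = (b1 : ℝ) - (a1 : ℝ) := by
          rw [hr1def, Nat.cast_sub ha1b1]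
        linarith
      · have h1 : ((gc1 z : ℕ) : ℝ) ≤ (b1 : ℝ) := Nat.cast_le.mpr hz2
        have h2 : ((gc1 w : ℕ) : ℝ) ≥ (a1 : ℝ) := Nat.cast_le.mpr hw1
        have h3 : ((r1 : ℕ) : ℝ) = (b1 : ℝ) - (a1 : ℝ) := by
          rw [hr1def, Nat.cast_sub ha1b1]
        linarith
    have c2 : |((gc2 z : ℕ) : ℝ) - ((gc2 w : ℕ) : ℝ)| ≤ ((r2 : ℕ) : ℝ) := by
      rw [abs_le]
      constructor
      · have h1 : ((gc2 z : ℕ) : ℝ) ≥ (a2 : ℝ) := Nat.cast_le.mpr hz3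
        have h2 : ((gc2 w : ℕ) : ℝ) ≤ (b2 : ℝ) := Nat.cast_le.mpr hw4
        have h3 : ((r2 : ℕ) : ℝ) = (b2 : ℝ) - (a2 : ℝ) := by
          rw [hr2def, Nat.cast_sub ha2b2]
        linarith
      · have h1 : ((gc2 z : ℕ) : ℝ) ≤ (b2 : ℝ) := Nat.cast_le.mpr hz4
        have h2 : ((gc2 w : ℕ) : ℝ) ≥ (a2 : ℝ) := Nat.cast_le.mpr hw3
        have h3 : ((r2 : ℕ) : ℝ) = (b2 : ℝ) - (a2 : ℝ) := by
          rw [hr2def, Nat.cast_sub ha2b2]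
        linarith
    linarith
  -- step bounds
  have hstep : ∀ m, m < M →
      grid2Dist (pnt m) (pnt (m + 1))
        ≤ 1 + ((r1 : ℕ) + 1 : ℝ) * ((((m + 1) / (r1 + 1) : ℕ) : ℝ) - ((m / (r1 + 1) : ℕ) : ℝ)) := by
    intro m _
    have hmod : m % (r1 + 1) ≤ r1 := Nat.lt_succ_iff.mp (Nat.mod_lt _ (Nat.succ_pos _))
    have hdm := Nat.div_add_mod m (r1 + 1)
    by_cases hc : m % (r1 + 1) = r1
    · -- wrap-around step
      have hm1 : m + 1 = (r1 + 1) * (m / (r1 + 1) + 1) := by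
        rw [Nat.mul_succ]; omega
      have hmod1 : (m + 1) % (r1 + 1) = 0 := by rw [hm1]; exact Nat.mul_mod_right _ _
      have hdiv1 : (m + 1) / (r1 + 1) = m / (r1 + 1) + 1 := by
        rw [hm1]; exact Nat.mul_div_cancel_left _ (Nat.succ_pos _)
      rw [grid2Dist_eq, hpnt1, hpnt1, hpnt2, hpnt2, hc, hmod1, hdiv1]
      have hmin : min (m / (r1 + 1)) r2 ≤ min (m / (r1 + 1) + 1) r2 ∧
          min (m / (r1 + 1) + 1) r2 ≤ min (m / (r1 + 1)) r2 + 1 := by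
        constructor <;> omega
      have e1 : |((a1 + r1 : ℕ) : ℝ) - ((a1 + 0 : ℕ) : ℝ)| = ((r1 : ℕ) : ℝ) := by
        have hi : ((a1 + r1 : ℕ) : ℝ) - ((a1 + 0 : ℕ) : ℝ) = ((r1 : ℕ) : ℝ) := by
          push_cast; ring
        rw [hi]
        exact abs_of_nonneg (Nat.cast_nonneg _)
      have e2 : |((a2 + min (m / (r1 + 1)) r2 : ℕ) : ℝ)
          - ((a2 + min (m / (r1 + 1) + 1) r2 : ℕ) : ℝ)| ≤ 1 := by
        have hle1 : a2 + min (m / (r1 + 1)) r2 ≤ a2 + min (m / (r1 + 1) + 1) r2 := by omega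
        have hle2 : a2 + min (m / (r1 + 1) + 1) r2 ≤ a2 + min (m / (r1 + 1)) r2 + 1 := by omega
        have hc1 : ((a2 + min (m / (r1 + 1)) r2 : ℕ) : ℝ)
            ≤ ((a2 + min (m / (r1 + 1) + 1) r2 : ℕ) : ℝ) := Nat.cast_le.mpr hle1
        have hc2 : ((a2 + min (m / (r1 + 1) + 1) r2 : ℕ) : ℝ)
            ≤ ((a2 + min (m / (r1 + 1)) r2 : ℕ) : ℝ) + 1 := by
          have := (Nat.cast_le (α := ℝ)).mpr hle2
          push_cast at this ⊢
          linarith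
        rw [abs_le]
        constructor <;> linarith
      rw [e1]
      have e3 : (((m / (r1 + 1) + 1 : ℕ) : ℝ)) - ((m / (r1 + 1) : ℕ) : ℝ) = 1 := by
        push_cast; ring
      rw [e3]
      push_cast
      push_cast at e2
      linarith
    · -- same-column step
      have hmodlt : m % (r1 + 1) < r1 := lt_of_le_of_ne hmod hc
      have hm1 : m + 1 = (r1 + 1) * (m / (r1 + 1)) + (m % (r1 + 1) + 1) := by omega
      have hlt : m % (r1 + 1) + 1 < r1 + 1 := Nat.succ_lt_succ hmodlt
      have hmod1 : (m + 1) % (r1 + 1) = m % (r1 + 1) + 1 := by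
        rw [hm1, Nat.mul_add_mod, Nat.mod_eq_of_lt hlt]
      have hdiv1 : (m + 1) / (r1 + 1) = m / (r1 + 1) := by
        rw [hm1, Nat.mul_add_div (Nat.succ_pos _), Nat.div_eq_of_lt hlt]
        exact Nat.add_zero _
      rw [grid2Dist_eq, hpnt1, hpnt1, hpnt2, hpnt2, hmod1, hdiv1]
      have e1 : |((a1 + m % (r1 + 1) : ℕ) : ℝ) - ((a1 + (m % (r1 + 1) + 1) : ℕ) : ℝ)| = 1 := by
        push_cast
        rw [show ((a1 : ℝ) + (m % (r1+1) : ℕ) - ((a1 : ℝ) + ((m % (r1+1) : ℕ) + 1))) = -1 by ring]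
        norm_num
      have e2 : |((a2 + min (m / (r1 + 1)) r2 : ℕ) : ℝ)
          - ((a2 + min (m / (r1 + 1)) r2 : ℕ) : ℝ)| = 0 := by
        rw [sub_self, abs_zero]
      rw [e1, e2]
      have e3 : (((m / (r1 + 1) : ℕ) : ℝ)) - ((m / (r1 + 1) : ℕ) : ℝ) = 0 := by ring
      rw [e3]
      norm_num
  -- telescoping sum of divs
  have htel : ∑ m ∈ Finset.range M, ((((m + 1) / (r1 + 1) : ℕ) : ℝ) - ((m / (r1 + 1) : ℕ) : ℝ))
      = ((r2 : ℕ) : ℝ) := by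
    rw [Finset.sum_range_sub (fun m => ((m / (r1 + 1) : ℕ) : ℝ)) M]
    have h1 : M / (r1 + 1) = r2 := by
      have hr1lt : r1 < r1 + 1 := Nat.lt_succ_self _
      rw [hMdef, Nat.add_mul_div_right _ _ (Nat.succ_pos _), Nat.div_eq_of_lt hr1lt]
      exact Nat.zero_add r2
    have h2 : 0 / (r1 + 1) = 0 := Nat.zero_div _
    rw [h1, h2]
    norm_num
  -- sum the steps
  have hmid : ∑ m ∈ Finset.range M, grid2Dist (pnt m) (pnt (m + 1))
      ≤ (M : ℝ) + ((r1 : ℕ) + 1 : ℝ) * ((r2 : ℕ) : ℝ) := by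
    calc ∑ m ∈ Finset.range M, grid2Dist (pnt m) (pnt (m + 1))
        ≤ ∑ m ∈ Finset.range M, (1 + ((r1 : ℕ) + 1 : ℝ)
            * ((((m + 1) / (r1 + 1) : ℕ) : ℝ) - ((m / (r1 + 1) : ℕ) : ℝ))) := by
          apply Finset.sum_le_sum
          intro m hm
          exact hstep m (Finset.mem_range.mp hm)
      _ = (M : ℝ) + ((r1 : ℕ) + 1 : ℝ) * ((r2 : ℕ) : ℝ) := by
          rw [Finset.sum_add_distrib, Finset.sum_const, ← Finset.mul_sum, htel]
          simp
  -- identify terms of the path length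
  have hterm0 : grid2Dist (F 0) (F 1) ≤ ((r1 : ℕ) : ℝ) + ((r2 : ℕ) : ℝ) := by
    have hF0 : F 0 = p.2 := by simp [hFdef]
    have hF1 : F 1 = pnt 0 := by
      simp only [hFdef]
      rw [if_neg (by omega), if_pos (by omega)]
    rw [hF0, hF1]
    obtain ⟨hx1, hx2, hx3, hx4⟩ := hSbox p.2 (fst_mem_Spq p q)
    exact hboxdist _ _ hx1 hx2 hx3 hx4 (hpbox1 0).1 (hpbox1 0).2 (hpbox2 0).1 (hpbox2 0).2
  have htermlast : grid2Dist (F (M + 1)) (F (M + 2)) ≤ ((r1 : ℕ) : ℝ) + ((r2 : ℕ) : ℝ) := by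
    have hFM1 : F (M + 1) = pnt M := by
      simp only [hFdef]
      rw [if_neg (by omega), if_pos (by omega)]
      simp
    have hFM2 : F (M + 2) = q.2 := by
      simp only [hFdef]
      rw [if_neg (by omega), if_neg (by omega)]
    rw [hFM1, hFM2]
    obtain ⟨hy1, hy2, hy3, hy4⟩ := hSbox q.2 (snd_mem_Spq p q)
    exact hboxdist _ _ (hpbox1 M).1 (hpbox1 M).2 (hpbox2 M).1 (hpbox2 M).2 hy1 hy2 hy3 hy4
  have htermmid : ∀ m, m < M → grid2Dist (F (m + 1)) (F (m + 2)) = grid2Dist (pnt m) (pnt (m + 1)) := by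
    intro m hm
    have hF1 : F (m + 1) = pnt m := by
      simp only [hFdef]
      rw [if_neg (by omega), if_pos (by omega)]
      simp
    have hF2 : F (m + 2) = pnt (m + 1) := by
      simp only [hFdef]
      rw [if_neg (by omega), if_pos (by omega)]
      simp [show m + 2 - 1 = m + 1 from rfl]
    rw [hF1, hF2]
  -- put together
  have hsplit : ∑ m ∈ Finset.range (M + 2), grid2Dist (F m) (F (m + 1))
      = grid2Dist (F 0) (F 1) + (∑ m ∈ Finset.range M, grid2Dist (F (m + 1)) (F (m + 2)))
        + grid2Dist (F (M + 1)) (F (M + 2)) := by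
    rw [Finset.sum_range_succ, Finset.sum_range_succ' (fun m => grid2Dist (F m) (F (m + 1))) M]
    ring
  have hmid2 : ∑ m ∈ Finset.range M, grid2Dist (F (m + 1)) (F (m + 2))
      ≤ (M : ℝ) + ((r1 : ℕ) + 1 : ℝ) * ((r2 : ℕ) : ℝ) := by
    calc ∑ m ∈ Finset.range M, grid2Dist (F (m + 1)) (F (m + 2))
        = ∑ m ∈ Finset.range M, grid2Dist (pnt m) (pnt (m + 1)) := by
          apply Finset.sum_congr rfl
          intro m hm
          exact htermmid m (Finset.mem_range.mp hm)
      _ ≤ _ := hmid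
  have hPL : pathLength grid2Dist l
      ≤ 2 * (((r1 : ℕ) : ℝ) + ((r2 : ℕ) : ℝ)) + (M : ℝ)
        + ((r1 : ℕ) + 1 : ℝ) * ((r2 : ℕ) : ℝ) := by
    rw [hlen, hsplit]
    linarith
  -- final numerics
  have hMr : (M : ℝ) = ((r1 : ℕ) : ℝ) + ((r2 : ℕ) : ℝ) * (((r1 : ℕ) : ℝ) + 1) := by
    rw [hMdef]
    push_cast
    ring
  have h2r1 := two_r1_le p q
  have h2r2 := two_r2_le p q
  rw [← ha1def, ← hb1def] at h2r1
  rw [← ha2def, ← hb2def] at h2r2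
  have hcast1 : ((r1 : ℕ) : ℝ) = ((b1 : ℕ) : ℝ) - ((a1 : ℕ) : ℝ) := by
    rw [hr1def, Nat.cast_sub ha1b1]
  have hcast2 : ((r2 : ℕ) : ℝ) = ((b2 : ℕ) : ℝ) - ((a2 : ℕ) : ℝ) := by
    rw [hr2def, Nat.cast_sub ha2b2]
  have hr1R : 2 * ((r1 : ℕ) : ℝ) ≤ Ru p q + Rv p q := by rw [hcast1]; linarith
  have hr2R : 2 * ((r2 : ℕ) : ℝ) ≤ Ru p q + Rv p q := by rw [hcast2]; linarith
  have hr1k : ((r1 : ℕ) : ℝ) ≤ (k : ℝ) := by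
    have : r1 ≤ k := by omega
    exact_mod_cast this
  have hr1n : (0:ℝ) ≤ ((r1 : ℕ) : ℝ) := Nat.cast_nonneg _
  have hr2n : (0:ℝ) ≤ ((r2 : ℕ) : ℝ) := Nat.cast_nonneg _
  have hkn : (0:ℝ) ≤ (k : ℝ) := Nat.cast_nonneg _
  have hRn : 0 ≤ Ru p q + Rv p q := by
    have := Ru_nonneg p q
    have := Rv_nonneg p q
    linarith
  have hprod : 2 * ((r1 : ℕ) : ℝ) * ((r2 : ℕ) : ℝ) ≤ (k : ℝ) * (Ru p q + Rv p q) := by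
    calc 2 * ((r1 : ℕ) : ℝ) * ((r2 : ℕ) : ℝ) = ((r1 : ℕ) : ℝ) * (2 * ((r2 : ℕ) : ℝ)) := by ring
      _ ≤ (k : ℝ) * (Ru p q + Rv p q) :=
          mul_le_mul hr1k hr2R (by linarith) hkn
  have hslack : 0 ≤ (2 * (k : ℝ) + 11) * (Ru p q + Rv p q) :=
    mul_nonneg (by linarith) hRn
  calc TSP grid2Dist p q ≤ pathLength grid2Dist l := hTSP
    _ ≤ 2 * (((r1 : ℕ) : ℝ) + ((r2 : ℕ) : ℝ)) + (M : ℝ)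
        + ((r1 : ℕ) + 1 : ℝ) * ((r2 : ℕ) : ℝ) := hPL
    _ ≤ (3 * (k : ℝ) + 15) * (Ru p q + Rv p q) := by
        rw [hMr]
        nlinarith [hr1R, hr2R, hprod, hslack, hRn]

end Snake
section Trees

variable {k n : ℕ}

/-- The gluing data for a weight `g` on the grid: configurations branch
at the maximal weight of their symmetric difference. -/
def muOf (g : Grid2 k n → ℝ≥0) : UltraData (Finset (Grid2 k n)) where
  mu A B := (((symmDiff A B).sup g : ℝ≥0) : ℝ)
  musymm A B := by rw [symmDiff_comm]
  ultra A B C := by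
    have hsub : symmDiff A C ≤ symmDiff A B ⊔ symmDiff B C := symmDiff_triangle A B C
    have h3 : ((symmDiff A C).sup g) ≤ (symmDiff A B).sup g ⊔ (symmDiff B C).sup g := by
      refine Finset.sup_le fun b hb => ?_
      have hb2 : b ∈ symmDiff A B ⊔ symmDiff B C := Finset.le_iff_subset.mp hsub hb
      rcases Finset.mem_union.mp hb2 with h | h
      · exact le_sup_of_le_left (Finset.le_sup h)
      · exact le_sup_of_le_right (Finset.le_sup h)
    exact le_trans (NNReal.coe_le_coe.mpr h3) (le_of_eq (NNReal.coe_max _ _))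
  muself A := by
    rw [symmDiff_self]
    simp

lemma dist_coord (w : Grid2 k n → ℕ) (p q : Lamp (Grid2 k n)) :
    dist ((muOf (fun z => ((w z : ℕ) : ℝ≥0))).pt (p.1, ((w p.2 : ℕ) : ℝ≥0)))
      ((muOf (fun z => ((w z : ℕ) : ℝ≥0))).pt (q.1, ((w q.2 : ℕ) : ℝ≥0)))
      = 2 * (((Spq p q).sup' (Spq_ne p q) w : ℕ) : ℝ)
        - ((w p.2 : ℕ) : ℝ) - ((w q.2 : ℕ) : ℝ) := by
  rw [UltraData.dist_pt]
  unfold UltraData.pd muOf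
  dsimp only
  have hsup : ((symmDiff p.1 q.1).sup (fun z => ((w z : ℕ) : ℝ≥0)))
      = (((symmDiff p.1 q.1).sup w : ℕ) : ℝ≥0) := by
    rw [Finset.comp_sup_eq_sup_comp (Nat.cast : ℕ → ℝ≥0)
      (fun x y => Nat.cast_max x y) (by simp)]
    rfl
  rw [hsup, ← max_sup_nat w p q]
  simp only [NNReal.coe_natCast, Nat.cast_max]

lemma dist_star (p q : Lamp (Grid2 k n)) :
    dist ((muOf (fun _ : Grid2 k n => (1/2 : ℝ≥0))).pt (p.1, 0))
      ((muOf (fun _ : Grid2 k n => (1/2 : ℝ≥0))).pt (q.1, 0)) = rho p q := by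
  rw [UltraData.dist_pt]
  unfold UltraData.pd muOf rho
  dsimp only
  by_cases hAB : p.1 = q.1
  · rw [if_pos hAB, hAB, symmDiff_self]
    simp
  · rw [if_neg hAB]
    have hne : (symmDiff p.1 q.1).Nonempty := by
      rw [Finset.nonempty_iff_ne_empty]
      intro he
      exact hAB (symmDiff_eq_bot.mp he)
    rw [Finset.sup_const hne]
    norm_num

/-- The six gluing data over the grid. -/
def Us (k n : ℕ) : Fin 6 → UltraData (Finset (Grid2 k n)) := fun i =>
  match i with
  | 0 => muOf (fun z => ((wU z : ℕ) : ℝ≥0))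
  | 1 => muOf (fun z => ((k + n - wU z : ℕ) : ℝ≥0))
  | 2 => muOf (fun z => ((wV z : ℕ) : ℝ≥0))
  | 3 => muOf (fun z => ((k + n - wV z : ℕ) : ℝ≥0))
  | 4 => muOf (fun _ => (1/2 : ℝ≥0))
  | 5 => muOf (fun _ => (1/2 : ℝ≥0))

/-- The level functions of the embedding. -/
def lvls (k n : ℕ) : Fin 6 → Grid2 k n → ℝ≥0 := fun i =>
  match i with
  | 0 => fun z => ((wU z : ℕ) : ℝ≥0)
  | 1 => fun z => ((k + n - wU z : ℕ) : ℝ≥0)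
  | 2 => fun z => ((wV z : ℕ) : ℝ≥0)
  | 3 => fun z => ((k + n - wV z : ℕ) : ℝ≥0)
  | 4 => fun _ => 0
  | 5 => fun _ => 0

/-- The embedding of the lamplighter space into the ℓ1-product of the six trees. -/
def emb (k n : ℕ) : Lamp (Grid2 k n) → ∀ i : Fin 6, (Us k n i).T :=
  fun p i => (Us k n i).pt (p.1, lvls k n i p.2)

lemma sum_dist_emb (p q : Lamp (Grid2 k n)) :
    piL1Dist (fun i => (Us k n i).metric) (emb k n p) (emb k n q)
      = 2 * (Ru p q + Rv p q) + 2 * rho p q := by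
  have h0 : dist (emb k n p 0) (emb k n q 0)
      = 2 * (((Spq p q).sup' (Spq_ne p q) wU : ℕ) : ℝ)
        - ((wU p.2 : ℕ) : ℝ) - ((wU q.2 : ℕ) : ℝ) := dist_coord wU p q
  have h1 : dist (emb k n p 1) (emb k n q 1)
      = 2 * (((Spq p q).sup' (Spq_ne p q) (fun z => k + n - wU z) : ℕ) : ℝ)
        - ((k + n - wU p.2 : ℕ) : ℝ) - ((k + n - wU q.2 : ℕ) : ℝ) :=
    dist_coord (fun z => k + n - wU z) p q
  have h2 : dist (emb k n p 2) (emb k n q 2)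
      = 2 * (((Spq p q).sup' (Spq_ne p q) wV : ℕ) : ℝ)
        - ((wV p.2 : ℕ) : ℝ) - ((wV q.2 : ℕ) : ℝ) := dist_coord wV p q
  have h3 : dist (emb k n p 3) (emb k n q 3)
      = 2 * (((Spq p q).sup' (Spq_ne p q) (fun z => k + n - wV z) : ℕ) : ℝ)
        - ((k + n - wV p.2 : ℕ) : ℝ) - ((k + n - wV q.2 : ℕ) : ℝ) :=
    dist_coord (fun z => k + n - wV z) p q
  have h4 : dist (emb k n p 4) (emb k n q 4) = rho p q := dist_star p q
  have h5 : dist (emb k n p 5) (emb k n q 5) = rho p q := dist_star p q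
  have e1 : (Spq p q).sup' (Spq_ne p q) (fun z => k + n - wU z) = k + n - mU p q :=
    sup'_sub (Spq_ne p q) wU (k + n) wU_le
  have e2 : (Spq p q).sup' (Spq_ne p q) (fun z => k + n - wV z) = k + n - mV p q :=
    sup'_sub (Spq_ne p q) wV (k + n) wV_le
  have hpi : piL1Dist (fun i => (Us k n i).metric) (emb k n p) (emb k n q)
      = ∑ i : Fin 6, dist (emb k n p i) (emb k n q i) := rfl
  rw [hpi, Fin.sum_univ_six, h0, h1, h2, h3, h4, h5, e1, e2]
  have b1 : mU p q ≤ k + n := le_trans (Finset.inf'_le wU (fst_mem_Spq p q)) (wU_le _)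
  have b2 : mV p q ≤ k + n := le_trans (Finset.inf'_le wV (fst_mem_Spq p q)) (wV_le _)
  rw [Nat.cast_sub b1, Nat.cast_sub b2, Nat.cast_sub (wU_le p.2), Nat.cast_sub (wU_le q.2),
    Nat.cast_sub (wV_le p.2), Nat.cast_sub (wV_le q.2)]
  unfold Ru Rv MU MV mU mV
  push_cast
  ring

end Trees

/-- For all `k ≤ n`, the lamplighter space `(La(G_{k,n}), d_La)` over
the two-dimensional grid `G_{k,n}` admits a biLipschitz embedding into an ℓ1-product of
6 ℝ-trees with distortion at most `12(k+5)`. -/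
theorem statement17 (k n : ℕ) (h : k ≤ n) :
    ∃ (T : Fin 6 → Type) (I : ∀ i, MetricSpace (T i)),
      (∀ i, @IsRTree (T i) (I i)) ∧
      ∃ f : Lamp (Grid2 k n) → ∀ i, T i,
        BiLipWith (dLa (grid2Dist : Grid2 k n → Grid2 k n → ℝ)) (piL1Dist I)
          (12 * ((k : ℝ) + 5)) f := by
  classical
  refine ⟨fun i => (Us k n i).T, fun i => (Us k n i).metric,
    fun i => (Us k n i).isRTree, emb k n, ?_, 2 / (3 * (k : ℝ) + 15), by positivity, ?_⟩
  · -- injectivity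
    intro p q hpq
    have h0 : piL1Dist (fun i => (Us k n i).metric) (emb k n p) (emb k n q) = 0 := by
      have hz : ∀ i : Fin 6, dist (emb k n p i) (emb k n q i) = 0 := by
        intro i
        rw [congrFun hpq i, dist_self]
      have hpi : piL1Dist (fun i => (Us k n i).metric) (emb k n p) (emb k n q)
          = ∑ i : Fin 6, dist (emb k n p i) (emb k n q i) := rfl
      rw [hpi, Finset.sum_eq_zero (fun i _ => hz i)]
    rw [sum_dist_emb] at h0
    have hRu := Ru_nonneg p q
    have hRv := Rv_nonneg p q
    have hrho := rho_nonneg p q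
    have hrho0 : rho p q = 0 := by linarith
    have hAB : p.1 = q.1 := by
      by_contra hne
      unfold rho at hrho0
      rw [if_neg hne] at hrho0
      norm_num at hrho0
    have hRu0 : Ru p q = 0 := by linarith
    have hRv0 : Rv p q = 0 := by linarith
    have hMU : MU p q = mU p q := by
      have hcast : ((MU p q : ℕ) : ℝ) = ((mU p q : ℕ) : ℝ) := by
        unfold Ru at hRu0; linarith
      exact_mod_cast hcast
    have hMV : MV p q = mV p q := by
      have hcast : ((MV p q : ℕ) : ℝ) = ((mV p q : ℕ) : ℝ) := by
        unfold Rv at hRv0; linarith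
      exact_mod_cast hcast
    have hwU : wU p.2 = wU q.2 := by
      have l1 : wU p.2 ≤ MU p q := Finset.le_sup' wU (fst_mem_Spq p q)
      have l2 : mU p q ≤ wU p.2 := Finset.inf'_le wU (fst_mem_Spq p q)
      have l3 : wU q.2 ≤ MU p q := Finset.le_sup' wU (snd_mem_Spq p q)
      have l4 : mU p q ≤ wU q.2 := Finset.inf'_le wU (snd_mem_Spq p q)
      omega
    have hwV : wV p.2 = wV q.2 := by
      have l1 : wV p.2 ≤ MV p q := Finset.le_sup' wV (fst_mem_Spq p q)
      have l2 : mV p q ≤ wV p.2 := Finset.inf'_le wV (fst_mem_Spq p q)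
      have l3 : wV q.2 ≤ MV p q := Finset.le_sup' wV (snd_mem_Spq p q)
      have l4 : mV p q ≤ wV q.2 := Finset.inf'_le wV (snd_mem_Spq p q)
      omega
    have hgc : gc1 p.2 = gc1 q.2 ∧ gc2 p.2 = gc2 q.2 := by
      have e1 : wU p.2 = gc1 p.2 + gc2 p.2 := rfl
      have e2 : wU q.2 = gc1 q.2 + gc2 q.2 := rfl
      have e3 : wV p.2 = gc1 p.2 + (n - gc2 p.2) := rfl
      have e4 : wV q.2 = gc1 q.2 + (n - gc2 q.2) := rfl
      have e5 := gc2_le p.2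
      have e6 := gc2_le q.2
      omega
    have hx : p.2 = q.2 := by
      apply Subtype.ext
      apply Prod.ext
      · rw [← Int.toNat_of_nonneg p.2.2.1, ← Int.toNat_of_nonneg q.2.2.1]
        exact_mod_cast hgc.1
      · rw [← Int.toNat_of_nonneg p.2.2.2.2.1, ← Int.toNat_of_nonneg q.2.2.2.2.1]
        exact_mod_cast hgc.2
    exact Prod.ext hAB hx
  · -- the two distance bounds
    intro p q
    have hsum := sum_dist_emb p q
    have hR := R_le_TSP p q
    have hsnake := TSP_le_snake p q
    have hrho := rho_nonneg p q
    have hTSP := TSP_nonneg grid2Dist_nonneg p q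
    have hRn : 0 ≤ Ru p q + Rv p q := by
      have := Ru_nonneg p q
      have := Rv_nonneg p q
      linarith
    have hc : (0:ℝ) < 3 * (k : ℝ) + 15 := by positivity
    have hdla : dLa grid2Dist p q = TSP grid2Dist p q + rho p q := rfl
    constructor
    · -- lower bound
      rw [hsum, hdla, div_mul_eq_mul_div, div_le_iff₀ hc]
      have hrc : rho p q ≤ rho p q * (3 * (k : ℝ) + 15) := by
        nlinarith
      nlinarith [hsnake, hrho, hRn]
    · -- upper bound
      rw [hsum, hdla]
      have hCs : 12 * ((k : ℝ) + 5) * (2 / (3 * (k : ℝ) + 15)) = 8 := by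
        field_simp
        ring
      calc 2 * (Ru p q + Rv p q) + 2 * rho p q
          ≤ 8 * (TSP grid2Dist p q + rho p q) := by linarith
        _ = 12 * ((k : ℝ) + 5) * (2 / (3 * (k : ℝ) + 15))
            * (TSP grid2Dist p q + rho p q) := by rw [hCs]

end Lamplighter
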